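/- arXiv:1211.3224 — 3 statements merged into one kernel-verified Lean document; each statement's English description precedes it below -/
import Mathlib

section
/- Let d ≥ 2 and let n, r be positive integers with r ≤ n. For every polytope P ∈ 𝒫_r there exists a polytope P* ∈ 𝒫_r^{(n)} such that |P* △ P| ≤ 2 d^{d+1} (3/2)^d β_d / n. -/
open MeasureTheory Set Real Pointwise ProbabilityTheory

noncomputable section

/-- The unit cube `[0,1]^d`. -/
def cube (d : ℕ) : Set (EuclideanSpace ℝ (Fin d)) := {x | ∀ i, x i ∈ Set.Icc (0:ℝ) 1}

/-- Volume of the unit Euclidean ball in dimension `d`. -/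
def unitBallVol (d : ℕ) : ℝ :=
  (volume (Metric.closedBall (0 : EuclideanSpace ℝ (Fin d)) 1)).toReal

/-- Law of one observation `(X, 1_G(X) + ξ)`. -/
def regMeasure (d : ℕ) (ν : Measure ℝ) (G : Set (EuclideanSpace ℝ (Fin d))) :
    Measure (EuclideanSpace ℝ (Fin d) × ℝ) :=
  Measure.map (fun p => (p.1, G.indicator (fun _ => (1:ℝ)) p.1 + p.2))
    ((volume.restrict (cube d)).prod ν)

/-- Law of `n` i.i.d. observations. -/
def sampleLaw (d n : ℕ) (ν : Measure ℝ) (G : Set (EuclideanSpace ℝ (Fin d))) :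
    Measure (Fin n → EuclideanSpace ℝ (Fin d) × ℝ) :=
  Measure.pi (fun _ => regMeasure d ν G)

/-- Assumption A : σ-subgaussian noise. -/
def SubGaussian (ν : Measure ℝ) (σ : ℝ) : Prop :=
  ∀ u : ℝ, ∫ t, Real.exp (u * t) ∂ν ≤ Real.exp (u^2 * σ^2 / 2)

/-- Polytopes in `[0,1]^d` with at most `r` vertices. -/
def polytopes (d r : ℕ) : Set (Set (EuclideanSpace ℝ (Fin d))) :=
  {P | ∃ V : Finset (EuclideanSpace ℝ (Fin d)), V.card ≤ r ∧ ↑V ⊆ cube d ∧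
    P = convexHull ℝ (V : Set (EuclideanSpace ℝ (Fin d)))}

/-- Polytopes in `[0,1]^d` with at most `r` vertices whose coordinates are
integer multiples of `1/n`. -/
def gridPolytopes (d r n : ℕ) : Set (Set (EuclideanSpace ℝ (Fin d))) :=
  {P | ∃ V : Finset (EuclideanSpace ℝ (Fin d)), V.card ≤ r ∧ ↑V ⊆ cube d ∧
    (∀ v ∈ V, ∀ i, ∃ k : ℤ, v i = k / n) ∧
    P = convexHull ℝ (V : Set (EuclideanSpace ℝ (Fin d)))}

/-- Compact convex subsets of `[0,1]^d`. -/
def convexSets (d : ℕ) : Set (Set (EuclideanSpace ℝ (Fin d))) :=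
  {C | Convex ℝ C ∧ IsCompact C ∧ C ⊆ cube d}

/-- Least squares criterion. -/
def crit {d n : ℕ} (P : Set (EuclideanSpace ℝ (Fin d)))
    (ω : Fin n → EuclideanSpace ℝ (Fin d) × ℝ) : ℝ :=
  ∑ i, (1 - 2 * (ω i).2) * P.indicator (fun _ => (1:ℝ)) (ω i).1

/-- `hatP` is a least squares estimator over `𝒫_r^{(n)}`. -/
def IsLSE (d r n : ℕ)
    (hatP : (Fin n → EuclideanSpace ℝ (Fin d) × ℝ) → Set (EuclideanSpace ℝ (Fin d))) :
    Prop :=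
  (∀ ω, hatP ω ∈ gridPolytopes d r n ∧ ∀ Q ∈ gridPolytopes d r n, crit (hatP ω) ω ≤ crit Q ω)
  ∧ Measurable (fun p : (EuclideanSpace ℝ (Fin d)) × (Fin n → EuclideanSpace ℝ (Fin d) × ℝ) =>
      (hatP p.2).indicator (fun _ => (1:ℝ)) p.1)

/-- A set estimator : measurable set-valued map with values Borel subsets of the cube. -/
def IsSetEstimator (d n : ℕ)
    (hatG : (Fin n → EuclideanSpace ℝ (Fin d) × ℝ) → Set (EuclideanSpace ℝ (Fin d))) :
    Prop :=
  (∀ ω, hatG ω ⊆ cube d ∧ MeasurableSet (hatG ω))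
  ∧ Measurable (fun p : (EuclideanSpace ℝ (Fin d)) × (Fin n → EuclideanSpace ℝ (Fin d) × ℝ) =>
      (hatG p.2).indicator (fun _ => (1:ℝ)) p.1)

/-- Nikodym (pseudo-)distance : Lebesgue measure of the symmetric difference. -/
def sdVol {d : ℕ} (G₁ G₂ : Set (EuclideanSpace ℝ (Fin d))) : ℝ :=
  (volume (symmDiff G₁ G₂)).toReal

/-! ### Auxiliary development for Lemma 1 -/

namespace GridApprox

open Function
open scoped ENNReal

variable {d : ℕ}

/-- Axis-aligned segment in coordinate `i`. -/
def seg (i : Fin d) (a η : ℝ) : Set (Fin d → ℝ) :=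
  {u | u i ∈ Icc a (a + η) ∧ ∀ j, j ≠ i → u j = 0}

/-- Symmetric box of half-side `c`. -/
def Box (c : ℝ) : Set (Fin d → ℝ) := {x | ∀ j, x j ∈ Icc (-c) c}

/-- Partial boxes indexed by a finite set of coordinates. -/
def qbox (s : Finset (Fin d)) (a : Fin d → ℝ) (η : ℝ) : Set (Fin d → ℝ) :=
  {u | (∀ i ∈ s, u i ∈ Icc (a i) (a i + η)) ∧ ∀ i ∉ s, u i = 0}

lemma interval_lemma (C : Set ℝ) (hC : Convex ℝ C) (hb : C ⊆ Icc (-2:ℝ) 2)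
    (a η : ℝ) (hη : 0 ≤ η) :
    volume (C + Icc a (a + η)) ≤ volume C + ENNReal.ofReal η := by
  rcases C.eq_empty_or_nonempty with rfl | hne
  · simp
  have hbdd : BddBelow C := (bddBelow_Icc : BddBelow (Icc (-2:ℝ) 2)).mono hb
  have hbdda : BddAbove C := (bddAbove_Icc : BddAbove (Icc (-2:ℝ) 2)).mono hb
  set m := sInf C with hm
  set M := sSup C with hM
  have hmM : m ≤ M := csInf_le_csSup hne hbdd hbdda
  have hsub : C + Icc a (a + η) ⊆ Icc (m + a) (M + (a + η)) := by
    rintro z ⟨c, hc, t, ht, rfl⟩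
    exact ⟨add_le_add (csInf_le hbdd hc) ht.1, add_le_add (le_csSup hbdda hc) ht.2⟩
  have h1 : volume (C + Icc a (a + η)) ≤ ENNReal.ofReal ((M - m) + η) := by
    calc volume (C + Icc a (a + η)) ≤ volume (Icc (m + a) (M + (a + η))) :=
          measure_mono hsub
      _ = ENNReal.ofReal ((M - m) + η) := by rw [Real.volume_Icc]; ring_nf
  have h2 : ENNReal.ofReal (M - m) ≤ volume C := by
    have hIoo : Ioo m M ⊆ C := by
      intro t ht
      obtain ⟨c₁, hc₁, hc₁t⟩ := (csInf_lt_iff hbdd hne).1 ht.1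
      obtain ⟨c₂, hc₂, hc₂t⟩ := (lt_csSup_iff hbdda hne).1 ht.2
      exact hC.ordConnected.out hc₁ hc₂ ⟨le_of_lt hc₁t, le_of_lt hc₂t⟩
    calc ENNReal.ofReal (M - m) = volume (Ioo m M) := (Real.volume_Ioo).symm
      _ ≤ volume C := measure_mono hIoo
  calc volume (C + Icc a (a + η)) ≤ ENNReal.ofReal ((M - m) + η) := h1
    _ = ENNReal.ofReal (M - m) + ENNReal.ofReal η := ENNReal.ofReal_add (by linarith) hη
    _ ≤ volume C + ENNReal.ofReal η := add_le_add_left h2 _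

lemma seg_eq_pi (i : Fin d) (a η : ℝ) :
    seg i a η = Set.pi univ (fun j => if j = i then Icc a (a + η) else ({0} : Set ℝ)) := by
  ext u
  simp only [seg, mem_setOf_eq, mem_pi, mem_univ, forall_true_left]
  constructor
  · rintro ⟨h1, h2⟩ j
    by_cases hj : j = i
    · subst hj; simp [h1]
    · simp [hj, h2 j hj]
  · intro h
    refine ⟨by simpa using h i, fun j hj => by simpa [hj] using h j⟩

lemma seg_compact (i : Fin d) (a η : ℝ) : IsCompact (seg i a η) := by
  rw [seg_eq_pi]
  refine isCompact_univ_pi (fun j => ?_)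
  split
  · exact isCompact_Icc
  · exact isCompact_singleton

lemma segment_step (i : Fin d) (A : Set (Fin d → ℝ)) (hAc : IsCompact A)
    (hAconv : Convex ℝ A) (hAb : A ⊆ Box 2) (a η : ℝ) (hη : 0 ≤ η) :
    volume (A + seg i a η) ≤ volume A + ENNReal.ofReal η * (ENNReal.ofReal 4) ^ (d - 1) := by
  classical
  set B' : Set (Fin d → ℝ) :=
    Set.pi univ (fun j => if j = i then Icc a (a + η) else Icc (-2:ℝ) 2) with hB'
  have hB'meas : MeasurableSet B' := MeasurableSet.univ_pi (fun j => by
    split <;> exact measurableSet_Icc)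
  have hABc : IsCompact (A + seg i a η) := hAc.add (seg_compact i a η)
  have hABmeas : MeasurableSet (A + seg i a η) := hABc.measurableSet
  have hAmeas : MeasurableSet A := hAc.measurableSet
  set f : (Fin d → ℝ) → ℝ≥0∞ := (A + seg i a η).indicator 1 with hfdef
  set g : (Fin d → ℝ) → ℝ≥0∞ := A.indicator 1 + B'.indicator 1 with hgdef
  have hf : Measurable f := measurable_const.indicator hABmeas
  have hg : Measurable g :=
    (measurable_const.indicator hAmeas).add (measurable_const.indicator hB'meas)
  -- pointwise slice inequality
  have key : ∀ x : Fin d → ℝ,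
      (∫⁻ t, f (update x i t)) ≤ ∫⁻ t, g (update x i t) := by
    intro x
    set C : Set ℝ := update x i ⁻¹' A with hCdef
    have hCmeas : MeasurableSet C := measurable_update x hAmeas
    have hT1 : (update x i ⁻¹' (A + seg i a η)) = C + Icc a (a + η) := by
      ext t
      constructor
      · intro ht
        obtain ⟨p, hp, u, hu, hpu⟩ := ht
        refine ⟨t - u i, ?_, u i, hu.1, by ring⟩
        show update x i (t - u i) ∈ A
        have hpe : p = update x i (t - u i) := by
          funext j
          by_cases hj : j = i
          · subst hj
            have := congrFun hpu j
            simp only [update_self, Pi.add_apply] at this ⊢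
            linarith [this]
          · have := congrFun hpu j
            simp only [update_of_ne hj, Pi.add_apply] at this ⊢
            rw [hu.2 j hj] at this
            linarith [this]
        rwa [← hpe]
      · rintro ⟨s, hs, c, hc, rfl⟩
        refine ⟨update x i s, hs, fun j => if j = i then c else 0, ⟨?_, ?_⟩, ?_⟩
        · simp [hc]
        · intro j hj; simp [if_neg hj]
        · funext j
          by_cases hj : j = i
          · subst hj; simp
          · simp [update_of_ne hj, if_neg hj]
    have hLHS : (∫⁻ t, f (update x i t)) = volume (C + Icc a (a + η)) := by
      rw [← hT1, ← lintegral_indicator_one (measurable_update x hABmeas)]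
      exact lintegral_congr fun t => rfl
    rcases C.eq_empty_or_nonempty with hCe | ⟨s₀, hs₀⟩
    · rw [hLHS, hCe]
      simp
    · -- C nonempty
      have hCconv : Convex ℝ C := by
        intro c₁ h₁ c₂ h₂ p q hp hq hpq
        show update x i (p • c₁ + q • c₂) ∈ A
        have : update x i (p • c₁ + q • c₂) = p • update x i c₁ + q • update x i c₂ := by
          funext j
          by_cases hj : j = i
          · subst hj; simp
          · simp only [update_of_ne hj, Pi.add_apply, Pi.smul_apply, smul_eq_mul]
            linear_combination (-(x j)) * hpq
        rw [this]
        exact hAconv h₁ h₂ hp hq hpq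
      have hCsub : C ⊆ Icc (-2:ℝ) 2 := by
        intro t ht
        have := hAb ht i
        simpa using this
      have hxj : ∀ j, j ≠ i → x j ∈ Icc (-2:ℝ) 2 := by
        intro j hj
        have := hAb hs₀ j
        rwa [update_of_ne hj] at this
      have hT2 : (update x i ⁻¹' B') = Icc a (a + η) := by
        ext t
        simp only [mem_preimage, hB', mem_pi, mem_univ, forall_true_left]
        constructor
        · intro h
          have := h i
          simpa using this
        · intro ht j
          by_cases hj : j = i
          · subst hj; simpa using ht
          · simp only [hj, if_neg hj]
            rw [update_of_ne hj]
            exact hxj j hj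
      have hRHS : (∫⁻ t, g (update x i t)) = volume C + ENNReal.ofReal η := by
        have e1 : ∀ t : ℝ, g (update x i t)
            = C.indicator 1 t + (Icc a (a + η)).indicator (1 : ℝ → ℝ≥0∞) t := by
          intro t
          have h1 : A.indicator (1 : (Fin d → ℝ) → ℝ≥0∞) (update x i t) = C.indicator 1 t := by
            by_cases ht : update x i t ∈ A
            · rw [Set.indicator_of_mem ht, Set.indicator_of_mem (show t ∈ C from ht)]; rfl
            · rw [Set.indicator_of_notMem ht, Set.indicator_of_notMem (show t ∉ C from ht)]
          have h2 : B'.indicator (1 : (Fin d → ℝ) → ℝ≥0∞) (update x i t)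
              = (Icc a (a + η)).indicator 1 t := by
            by_cases ht : t ∈ Icc a (a + η)
            · have hm : update x i t ∈ B' := by rw [← hT2] at ht; exact ht
              rw [Set.indicator_of_mem hm, Set.indicator_of_mem ht]; rfl
            · have hm : update x i t ∉ B' := by rw [← hT2] at ht; exact ht
              rw [Set.indicator_of_notMem hm, Set.indicator_of_notMem ht]
          simp only [hgdef, Pi.add_apply, h1, h2]
        simp_rw [e1]
        rw [lintegral_add_left (Measurable.indicator measurable_one hCmeas :
            Measurable (C.indicator (1 : ℝ → ℝ≥0∞))),
          lintegral_indicator_one hCmeas, lintegral_indicator_one measurableSet_Icc,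
          Real.volume_Icc]
        congr 2
        ring
      rw [hLHS, hRHS]
      exact interval_lemma C hCconv hCsub a η hη
  -- volume of B'
  have hvolB' : volume B' = ENNReal.ofReal η * (ENNReal.ofReal 4) ^ (d - 1) := by
    rw [hB', volume_pi_pi]
    have hv : ∀ j : Fin d, volume (if j = i then Icc a (a + η) else Icc (-2:ℝ) 2)
        = if j = i then ENNReal.ofReal η else ENNReal.ofReal 4 := by
      intro j
      by_cases hj : j = i
      · rw [if_pos hj, if_pos hj, Real.volume_Icc]
        congr 1; ring
      · rw [if_neg hj, if_neg hj, Real.volume_Icc]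
        norm_num
    rw [Finset.prod_congr rfl (fun j _ => hv j),
      ← Finset.mul_prod_erase Finset.univ _ (Finset.mem_univ i), if_pos rfl]
    congr 1
    rw [Finset.prod_congr rfl
      (fun j hj => if_neg (Finset.ne_of_mem_erase hj)), Finset.prod_const,
      Finset.card_erase_of_mem (Finset.mem_univ i), Finset.card_univ, Fintype.card_fin]
  -- main computation via marginals
  set μ : Fin d → Measure ℝ := fun _ => volume with hμ
  have hle : (fun x => ∫⁻ t, f (update x i t) ∂(μ i))
      ≤ (fun x => ∫⁻ t, g (update x i t) ∂(μ i)) := fun x => key x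
  calc volume (A + seg i a η)
      = ∫⁻ x, f x ∂(Measure.pi μ) := by
        rw [← volume_pi]
        exact (lintegral_indicator_one hABmeas).symm
    _ = (∫⋯∫⁻_Finset.univ, f ∂μ) 0 := lintegral_eq_lmarginal_univ 0
    _ = (∫⋯∫⁻_(Finset.univ.erase i), (fun x => ∫⁻ t, f (update x i t) ∂(μ i)) ∂μ) 0 := by
        rw [lmarginal_erase' _ hf (Finset.mem_univ i)]
    _ ≤ (∫⋯∫⁻_(Finset.univ.erase i), (fun x => ∫⁻ t, g (update x i t) ∂(μ i)) ∂μ) 0 :=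
        lmarginal_mono hle 0
    _ = (∫⋯∫⁻_Finset.univ, g ∂μ) 0 := by
        rw [lmarginal_erase' _ hg (Finset.mem_univ i)]
    _ = ∫⁻ x, g x ∂(Measure.pi μ) := (lintegral_eq_lmarginal_univ 0).symm
    _ = volume A + volume B' := by
        simp only [hgdef, Pi.add_apply]
        rw [lintegral_add_left (Measurable.indicator measurable_one hAmeas :
            Measurable (A.indicator (1 : (Fin d → ℝ) → ℝ≥0∞))),
          lintegral_indicator_one hAmeas, lintegral_indicator_one hB'meas, ← volume_pi]
    _ = volume A + ENNReal.ofReal η * (ENNReal.ofReal 4) ^ (d - 1) := by rw [hvolB']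

lemma qbox_eq_pi (s : Finset (Fin d)) (a : Fin d → ℝ) (η : ℝ) :
    qbox s a η = Set.pi univ (fun j => if j ∈ s then Icc (a j) (a j + η) else ({0} : Set ℝ)) := by
  ext u
  simp only [qbox, mem_setOf_eq, mem_pi, mem_univ, forall_true_left]
  constructor
  · rintro ⟨h1, h2⟩ j
    by_cases hj : j ∈ s
    · simp [hj, h1 j hj]
    · simp [hj, h2 j hj]
  · intro h
    refine ⟨fun j hj => by simpa [hj] using h j, fun j hj => by simpa [hj] using h j⟩

lemma qbox_compact (s : Finset (Fin d)) (a : Fin d → ℝ) (η : ℝ) : IsCompact (qbox s a η) := by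
  rw [qbox_eq_pi]
  refine isCompact_univ_pi (fun j => ?_)
  split
  · exact isCompact_Icc
  · exact isCompact_singleton

lemma qbox_convex (s : Finset (Fin d)) (a : Fin d → ℝ) (η : ℝ) : Convex ℝ (qbox s a η) := by
  rw [qbox_eq_pi]
  refine convex_pi (fun j _ => ?_)
  split
  · exact convex_Icc _ _
  · exact convex_singleton _

lemma qbox_empty (a : Fin d → ℝ) (η : ℝ) : qbox ∅ a η = ({0} : Set (Fin d → ℝ)) := by
  ext u
  simp only [qbox, Finset.notMem_empty, mem_setOf_eq, mem_singleton_iff]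
  constructor
  · rintro ⟨-, h⟩
    funext j
    exact h j (by simp)
  · rintro rfl
    exact ⟨fun i hi => absurd hi (by simp), fun i _ => rfl⟩

lemma qbox_insert (i : Fin d) (s : Finset (Fin d)) (hi : i ∉ s) (a : Fin d → ℝ) (η : ℝ) :
    qbox (insert i s) a η = qbox s a η + seg i (a i) η := by
  classical
  ext u
  constructor
  · rintro ⟨h1, h2⟩
    refine ⟨update u i 0, ⟨?_, ?_⟩, fun j => if j = i then u i else 0, ⟨?_, ?_⟩, ?_⟩
    · intro j hj
      rw [update_of_ne (fun h : j = i => hi (h ▸ hj))]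
      exact h1 j (Finset.mem_insert_of_mem hj)
    · intro j hj
      by_cases hji : j = i
      · subst hji; simp
      · rw [update_of_ne hji]
        exact h2 j (fun h => hj (Finset.mem_of_mem_insert_of_ne h hji))
    · simp only [if_pos rfl]
      exact h1 i (Finset.mem_insert_self i s)
    · intro j hj; simp [if_neg hj]
    · funext j
      by_cases hj : j = i
      · subst hj; simp
      · simp [update_of_ne hj, if_neg hj]
  · rintro ⟨p, hp, v, hv, rfl⟩
    constructor
    · intro j hj
      rcases Finset.mem_insert.1 hj with rfl | hjs
      · have : p j = 0 := hp.2 j hi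
        simpa [this] using hv.1
      · have : v j = 0 := hv.2 j (fun h => hi (h ▸ hjs))
        simpa [this] using hp.1 j hjs
    · intro j hj
      have hj1 : j ∉ s := fun h => hj (Finset.mem_insert_of_mem h)
      have hj2 : j ≠ i := fun h => hj (h ▸ Finset.mem_insert_self i s)
      show p j + v j = 0
      rw [hp.2 j hj1, hv.2 j hj2, add_zero]

lemma vol_add_qbox (s : Finset (Fin d)) (A : Set (Fin d → ℝ)) (hAc : IsCompact A)
    (hAconv : Convex ℝ A) (hAb : A ⊆ Box 1) (a : Fin d → ℝ) (η : ℝ) (hη : 0 ≤ η)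
    (ha : ∀ i, -1 ≤ a i) (hb : ∀ i, a i + η ≤ 1) :
    volume (A + qbox s a η)
      ≤ volume A + s.card • (ENNReal.ofReal η * (ENNReal.ofReal 4) ^ (d - 1)) := by
  classical
  induction s using Finset.induction_on with
  | empty =>
    simp [qbox_empty]
  | @insert i s hi IH =>
    have hAq : IsCompact (A + qbox s a η) := hAc.add (qbox_compact s a η)
    have hAqconv : Convex ℝ (A + qbox s a η) := hAconv.add (qbox_convex s a η)
    have hAqb : A + qbox s a η ⊆ Box 2 := by
      rintro x ⟨p, hp, u, hu, rfl⟩ j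
      have h1 := hAb hp j
      have h2 : -1 ≤ u j ∧ u j ≤ 1 := by
        by_cases hj : j ∈ s
        · have := hu.1 j hj
          exact ⟨le_trans (ha j) this.1, le_trans this.2 (hb j)⟩
        · rw [hu.2 j hj]; norm_num
      have h1a : -1 ≤ p j := h1.1
      have h1b : p j ≤ 1 := h1.2
      constructor
      · show -2 ≤ p j + u j
        linarith [h2.1]
      · show p j + u j ≤ 2
        linarith [h2.2]
    calc volume (A + qbox (insert i s) a η)
        = volume ((A + qbox s a η) + seg i (a i) η) := by
          rw [qbox_insert i s hi a η, ← add_assoc]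
      _ ≤ volume (A + qbox s a η) + ENNReal.ofReal η * (ENNReal.ofReal 4) ^ (d - 1) :=
          segment_step i _ hAq hAqconv hAqb (a i) η hη
      _ ≤ (volume A + s.card • (ENNReal.ofReal η * (ENNReal.ofReal 4) ^ (d - 1)))
            + ENNReal.ofReal η * (ENNReal.ofReal 4) ^ (d - 1) := add_le_add_left IH _
      _ = volume A + (insert i s).card • (ENNReal.ofReal η * (ENNReal.ofReal 4) ^ (d - 1)) := by
          rw [Finset.card_insert_of_notMem hi, add_assoc, succ_nsmul]

lemma vol_diff_qbox (A : Set (Fin d → ℝ)) (hAc : IsCompact A) (hAconv : Convex ℝ A)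
    (hAb : A ⊆ Box 1) (a : Fin d → ℝ) (η : ℝ) (hη : 0 ≤ η) (ha : ∀ i, -1 ≤ a i)
    (ha0 : ∀ i, a i ≤ 0) (h0 : ∀ i, 0 ≤ a i + η) (hb : ∀ i, a i + η ≤ 1) :
    volume ((A + qbox Finset.univ a η) \ A)
      ≤ (d : ℝ≥0∞) * (ENNReal.ofReal η * (ENNReal.ofReal 4) ^ (d - 1)) := by
  have hsubset : A ⊆ A + qbox Finset.univ a η := by
    intro x hx
    exact ⟨x, hx, 0, ⟨fun i _ => ⟨ha0 i, h0 i⟩, fun i _ => rfl⟩, add_zero x⟩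
  have hdiff := measure_diff hsubset hAc.measurableSet.nullMeasurableSet (hAc.measure_lt_top (μ := volume)).ne
  rw [hdiff, tsub_le_iff_right]
  have := vol_add_qbox Finset.univ A hAc hAconv hAb a η hη ha hb
  rw [Finset.card_univ, Fintype.card_fin] at this
  calc volume (A + qbox Finset.univ a η)
      ≤ volume A + d • (ENNReal.ofReal η * (ENNReal.ofReal 4) ^ (d - 1)) := this
    _ = (d : ℝ≥0∞) * (ENNReal.ofReal η * (ENNReal.ofReal 4) ^ (d - 1)) + volume A := by
        rw [nsmul_eq_mul, add_comm]

lemma vol_transfer (S : Set (EuclideanSpace ℝ (Fin d))) (hS : MeasurableSet S) :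
    volume S = (volume : Measure (Fin d → ℝ)) (WithLp.toLp 2 ⁻¹' S : Set (Fin d → ℝ)) := by
  exact ((PiLp.volume_preserving_toLp (Fin d)).measure_preimage hS.nullMeasurableSet).symm

lemma vol_shell (K : Set (EuclideanSpace ℝ (Fin d))) (hKc : IsCompact K)
    (hKconv : Convex ℝ K) (hKb : K ⊆ cube d) (a η : ℝ) (hη : 0 ≤ η)
    (ha : -1 ≤ a) (ha0 : a ≤ 0) (h0 : 0 ≤ a + η) (hb : a + η ≤ 1) :
    volume ((K + {u : EuclideanSpace ℝ (Fin d) | ∀ i, u i ∈ Icc a (a + η)}) \ K)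
      ≤ (d : ℝ≥0∞) * (ENNReal.ofReal η * (ENNReal.ofReal 4) ^ (d - 1)) := by
  classical
  set h := PiLp.continuousLinearEquiv 2 ℝ (fun _ : Fin d => ℝ) with hh
  have hQ : (WithLp.toLp 2 ⁻¹' {u : EuclideanSpace ℝ (Fin d) | ∀ i, u i ∈ Icc a (a + η)} :
      Set (Fin d → ℝ)) = qbox Finset.univ (fun _ => a) η := by
    ext u
    constructor
    · intro h
      exact ⟨fun i _ => h i, fun i hi => absurd (Finset.mem_univ i) hi⟩
    · intro h i
      exact h.1 i (Finset.mem_univ i)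
  have hKc' : IsCompact (WithLp.toLp 2 ⁻¹' K : Set (Fin d → ℝ)) :=
    h.symm.toHomeomorph.isCompact_preimage.2 hKc
  have hKconv' : Convex ℝ (WithLp.toLp 2 ⁻¹' K : Set (Fin d → ℝ)) :=
    hKconv.linear_preimage h.symm.toLinearMap
  have hKbpi : (WithLp.toLp 2 ⁻¹' K : Set (Fin d → ℝ)) ⊆ Box 1 := by
    intro x hx j
    have h01 : (0:ℝ) ≤ x j ∧ x j ≤ 1 := hKb hx j
    exact ⟨by linarith [h01.1], by linarith [h01.2]⟩
  have hpi := vol_diff_qbox (WithLp.toLp 2 ⁻¹' K : Set (Fin d → ℝ)) hKc' hKconv' hKbpi (fun _ => a) η hη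
    (fun _ => ha) (fun _ => ha0) (fun _ => h0) (fun _ => hb)
  have hqc : IsCompact ({u : EuclideanSpace ℝ (Fin d) | ∀ i, u i ∈ Icc a (a + η)}) := by
    have h' := qbox_compact (Finset.univ : Finset (Fin d)) (fun _ => a) η
    rw [← hQ] at h'
    exact h.toHomeomorph.isCompact_preimage.2 h'
  have hmeasE : MeasurableSet
      ((K + {u : EuclideanSpace ℝ (Fin d) | ∀ i, u i ∈ Icc a (a + η)}) \ K) :=
    ((hKc.add hqc).measurableSet).diff hKc.measurableSet
  rw [vol_transfer _ hmeasE]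
  rw [← hQ] at hpi
  have hset : WithLp.toLp 2 ⁻¹'
      ((K + {u : EuclideanSpace ℝ (Fin d) | ∀ i, u i ∈ Icc a (a + η)}) \ K)
      = (WithLp.toLp 2 ⁻¹' K + WithLp.toLp 2 ⁻¹'
        {u : EuclideanSpace ℝ (Fin d) | ∀ i, u i ∈ Icc a (a + η)}) \ WithLp.toLp 2 ⁻¹' K := by
    ext x
    constructor
    · rintro ⟨⟨k, hk, q, hq, hkq⟩, hxK⟩
      refine ⟨⟨WithLp.ofLp k, by simpa using hk, WithLp.ofLp q, by simpa using hq, ?_⟩, hxK⟩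
      have := congrArg WithLp.ofLp hkq
      simpa using this
    · rintro ⟨⟨k, hk, q, hq, rfl⟩, hxK⟩
      exact ⟨⟨WithLp.toLp 2 k, hk, WithLp.toLp 2 q, hq, by simp⟩, hxK⟩
  rw [hset]
  exact hpi

/-- Convexity of coordinate boxes in Euclidean space. -/
lemma ebox_convex (a b : ℝ) :
    Convex ℝ ({u : EuclideanSpace ℝ (Fin d) | ∀ i, u i ∈ Icc a b}) := by
  intro x hx y hy p q hp hq hpq
  intro i
  have hco : (p • x + q • y) i = p * x i + q * y i := by
    simp [PiLp.add_apply, PiLp.smul_apply]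
  rw [hco]
  exact (convex_Icc a b) (hx i) (hy i) hp hq hpq

/-- Volume of coordinate boxes in Euclidean space. -/
lemma ebox_volume (a b : ℝ) (hab : a ≤ b) :
    volume ({u : EuclideanSpace ℝ (Fin d) | ∀ i, u i ∈ Icc a b})
      = (ENNReal.ofReal (b - a)) ^ d := by
  classical
  have hpi : (WithLp.toLp 2 ⁻¹' {u : EuclideanSpace ℝ (Fin d) | ∀ i, u i ∈ Icc a b} :
      Set (Fin d → ℝ)) = Set.pi univ (fun _ => Icc a b) := by
    ext u
    constructor
    · intro h i _
      exact h i
    · intro h i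
      exact h i (mem_univ i)
  have hmeasp : MeasurableSet (({u : EuclideanSpace ℝ (Fin d) | ∀ i, u i ∈ Icc a b} :
      Set (EuclideanSpace ℝ (Fin d)))) := by
    have h := (isCompact_univ_pi (fun _ : Fin d => isCompact_Icc (a := a) (b := b)))
    rw [← hpi] at h
    exact ((PiLp.continuousLinearEquiv 2 ℝ (fun _ : Fin d => ℝ)).toHomeomorph.isCompact_preimage.2
      h).measurableSet
  rw [vol_transfer _ hmeasp]
  rw [hpi]
  rw [volume_pi_pi]
  simp [Real.volume_Icc]

/-- Lower bound for the volume of the unit ball. -/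
lemma unitBallVol_ge (hd : 1 ≤ d) : (2 / Real.sqrt d) ^ d ≤ unitBallVol d := by
  have hd0 : (0:ℝ) < d := by exact_mod_cast hd
  have hsq : (0:ℝ) < Real.sqrt d := Real.sqrt_pos.2 hd0
  set s : ℝ := 1 / Real.sqrt d with hs
  have hs0 : 0 < s := by positivity
  have hsub : ({u : EuclideanSpace ℝ (Fin d) | ∀ i, u i ∈ Icc (-s) s})
      ⊆ Metric.closedBall (0 : EuclideanSpace ℝ (Fin d)) 1 := by
    intro x hx
    rw [Metric.mem_closedBall, dist_zero_right, EuclideanSpace.norm_eq]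
    have hsum : (∑ i, ‖x i‖ ^ 2) ≤ 1 := by
      have hbound : ∀ i : Fin d, ‖x i‖ ^ 2 ≤ s ^ 2 := by
        intro i
        have h := hx i
        have : |x i| ≤ s := abs_le.2 ⟨h.1, h.2⟩
        calc ‖x i‖ ^ 2 = |x i| ^ 2 := by rw [Real.norm_eq_abs]
          _ ≤ s ^ 2 := by nlinarith [abs_nonneg (x i)]
      have hs2 : s ^ 2 = 1 / d := by
        rw [hs, div_pow, one_pow, Real.sq_sqrt hd0.le]
      calc (∑ i, ‖x i‖ ^ 2) ≤ ∑ _i : Fin d, s ^ 2 := Finset.sum_le_sum (fun i _ => hbound i)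
        _ = d * s ^ 2 := by rw [Finset.sum_const, Finset.card_univ, Fintype.card_fin,
              nsmul_eq_mul]
        _ = 1 := by rw [hs2]; field_simp
    calc Real.sqrt (∑ i, ‖x i‖ ^ 2) ≤ Real.sqrt 1 := Real.sqrt_le_sqrt hsum
      _ = 1 := Real.sqrt_one
  have hvol := ebox_volume (d := d) (-s) s (by linarith)
  have hmono := measure_mono (μ := (volume : Measure (EuclideanSpace ℝ (Fin d)))) hsub
  rw [hvol] at hmono
  have hlt : volume (Metric.closedBall (0 : EuclideanSpace ℝ (Fin d)) 1) ≠ ⊤ :=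
    (IsCompact.measure_lt_top (isCompact_closedBall _ _)).ne
  have := ENNReal.toReal_mono hlt hmono
  rw [ENNReal.toReal_pow, ENNReal.toReal_ofReal (by linarith)] at this
  calc (2 / Real.sqrt d) ^ d = (s - (-s)) ^ d := by
        congr 1
        rw [hs]; ring
    _ ≤ unitBallVol d := this

end GridApprox

/-- **Lemma 1** : any polytope of `𝒫_r` is approximated within `2 d^{d+1} (3/2)^d β_d / n`
in Nikodym distance by a polytope of `𝒫_r^{(n)}`. -/
theorem grid_polytope_approx (d n r : ℕ) (hd : 2 ≤ d) (hn : 0 < n) (hr : 0 < r)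
    (hrn : r ≤ n)
    (P : Set (EuclideanSpace ℝ (Fin d))) (hP : P ∈ polytopes d r) :
    ∃ Pstar ∈ gridPolytopes d r n,
      sdVol Pstar P ≤ 2 * (d:ℝ)^(d+1) * (3/2)^d * unitBallVol d / n := by
  classical
  obtain ⟨V, hVcard, hVcube, rfl⟩ := hP
  have hn0 : (0:ℝ) < n := by exact_mod_cast hn
  set η : ℝ := 1 / n with hηdef
  have hη0 : 0 < η := by positivity
  have hη1 : η ≤ 1 := by
    rw [hηdef, div_le_one hn0]
    exact_mod_cast hn
  -- rounding map
  set rp : EuclideanSpace ℝ (Fin d) → EuclideanSpace ℝ (Fin d) :=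
    fun v => WithLp.toLp 2 (fun i => (⌊(n : ℝ) * v i⌋ : ℝ) / n) with hrp
  have hrp_le : ∀ (v : EuclideanSpace ℝ (Fin d)) (i : Fin d), rp v i ≤ v i := by
    intro v i
    show (⌊(n : ℝ) * v i⌋ : ℝ) / n ≤ v i
    rw [div_le_iff₀ hn0]
    calc (⌊(n : ℝ) * v i⌋ : ℝ) ≤ (n : ℝ) * v i := Int.floor_le _
      _ = v i * n := by ring
  have hrp_ge : ∀ (v : EuclideanSpace ℝ (Fin d)) (i : Fin d), v i - η ≤ rp v i := by
    intro v i
    show v i - η ≤ (⌊(n : ℝ) * v i⌋ : ℝ) / n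
    rw [le_div_iff₀ hn0, hηdef]
    have h2 : (n : ℝ) * v i - 1 ≤ (⌊(n : ℝ) * v i⌋ : ℝ) :=
      le_of_lt (Int.sub_one_lt_floor ((n : ℝ) * v i))
    calc (v i - 1 / n) * n = (n : ℝ) * v i - 1 := by field_simp
      _ ≤ (⌊(n : ℝ) * v i⌋ : ℝ) := h2
  set W : Finset (EuclideanSpace ℝ (Fin d)) := V.image rp with hW
  have hWcube : (W : Set (EuclideanSpace ℝ (Fin d))) ⊆ cube d := by
    intro w hw
    obtain ⟨v, hv, rfl⟩ := Finset.mem_image.1 (Finset.mem_coe.1 hw)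
    intro i
    have hvi := hVcube (Finset.mem_coe.2 hv) i
    constructor
    · show (0:ℝ) ≤ (⌊(n : ℝ) * v i⌋ : ℝ) / n
      apply div_nonneg _ hn0.le
      exact_mod_cast Int.floor_nonneg.2 (by nlinarith [hvi.1])
    · show (⌊(n : ℝ) * v i⌋ : ℝ) / n ≤ 1
      rw [div_le_one hn0]
      calc (⌊(n : ℝ) * v i⌋ : ℝ) ≤ (n : ℝ) * v i := Int.floor_le _
        _ ≤ n := by nlinarith [hvi.2]
  -- the convex bodies
  set K := convexHull ℝ (V : Set (EuclideanSpace ℝ (Fin d))) with hK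
  set Ks := convexHull ℝ (W : Set (EuclideanSpace ℝ (Fin d))) with hKs
  have hKc : IsCompact K := V.finite_toSet.isCompact_convexHull (𝕜 := ℝ)
  have hKsc : IsCompact Ks := W.finite_toSet.isCompact_convexHull (𝕜 := ℝ)
  have hKconv : Convex ℝ K := convex_convexHull ℝ _
  have hKsconv : Convex ℝ Ks := convex_convexHull ℝ _
  have hcubeconv : Convex ℝ (cube d) := GridApprox.ebox_convex 0 1
  have hKcube : K ⊆ cube d := convexHull_min hVcube hcubeconv
  have hKscube : Ks ⊆ cube d := convexHull_min hWcube hcubeconv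
  -- the two boxes
  set EB0 : Set (EuclideanSpace ℝ (Fin d)) := {u | ∀ i, u i ∈ Icc 0 (0 + η)} with hEB0
  set EBm : Set (EuclideanSpace ℝ (Fin d)) := {u | ∀ i, u i ∈ Icc (-η) (-η + η)} with hEBm
  -- inclusions
  have hsub1 : K ⊆ Ks + EB0 := by
    apply convexHull_min _ (hKsconv.add (GridApprox.ebox_convex 0 (0 + η)))
    intro v hv
    refine ⟨rp v, subset_convexHull ℝ _
      (Finset.mem_coe.2 (Finset.mem_image_of_mem rp (Finset.mem_coe.1 hv))), v - rp v, ?_, ?_⟩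
    · intro i
      have h1 := hrp_le v i
      have h2 := hrp_ge v i
      have hco : (v - rp v) i = v i - rp v i := rfl
      rw [hco]
      constructor
      · linarith
      · linarith
    · exact add_sub_cancel (rp v) v
  have hsub2 : Ks ⊆ K + EBm := by
    apply convexHull_min _ (hKconv.add (GridApprox.ebox_convex (-η) (-η + η)))
    intro w hw
    obtain ⟨v, hv, rfl⟩ := Finset.mem_image.1 (Finset.mem_coe.1 hw)
    refine ⟨v, subset_convexHull ℝ _ (Finset.mem_coe.2 hv), rp v - v, ?_, ?_⟩
    · intro i
      have h1 := hrp_le v i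
      have h2 := hrp_ge v i
      have hco : (rp v - v) i = rp v i - v i := rfl
      rw [hco]
      constructor
      · linarith
      · linarith
    · exact add_sub_cancel v (rp v)
  -- the shell estimates
  have hshell1 := GridApprox.vol_shell Ks hKsc hKsconv hKscube 0 η hη0.le
    (by norm_num) le_rfl (by linarith) (by linarith)
  have hshell2 := GridApprox.vol_shell K hKc hKconv hKcube (-η) η hη0.le
    (by linarith) (by linarith) (by linarith) (by linarith)
  set D : ENNReal := (d : ENNReal) * (ENNReal.ofReal η * (ENNReal.ofReal 4) ^ (d - 1)) with hD
  have hsd : symmDiff Ks K ⊆ ((K + EBm) \ K) ∪ ((Ks + EB0) \ Ks) := by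
    intro x hx
    rcases Set.mem_symmDiff.1 hx with ⟨hx1, hx2⟩ | ⟨hx1, hx2⟩
    · exact Or.inl ⟨hsub2 hx1, hx2⟩
    · exact Or.inr ⟨hsub1 hx1, hx2⟩
  have hvol : volume (symmDiff Ks K) ≤ D + D := by
    calc volume (symmDiff Ks K)
        ≤ volume (((K + EBm) \ K) ∪ ((Ks + EB0) \ Ks)) := measure_mono hsd
      _ ≤ volume ((K + EBm) \ K) + volume ((Ks + EB0) \ Ks) := measure_union_le _ _
      _ ≤ D + D := add_le_add hshell2 hshell1
  have hDne : D ≠ ⊤ := by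
    rw [hD]
    exact ENNReal.mul_ne_top (ENNReal.natCast_ne_top d)
      (ENNReal.mul_ne_top ENNReal.ofReal_ne_top (ENNReal.pow_ne_top ENNReal.ofReal_ne_top))
  have hsum_ne : D + D ≠ ⊤ := ENNReal.add_ne_top.2 ⟨hDne, hDne⟩
  have htoReal : (volume (symmDiff Ks K)).toReal ≤ (D + D).toReal :=
    ENNReal.toReal_mono hsum_ne hvol
  have hDval : (D + D).toReal = 2 * ((d:ℝ) * (η * 4 ^ (d - 1))) := by
    rw [ENNReal.toReal_add hDne hDne, hD, ENNReal.toReal_mul, ENNReal.toReal_mul,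
      ENNReal.toReal_pow, ENNReal.toReal_ofReal hη0.le,
      ENNReal.toReal_ofReal (by norm_num : (0:ℝ) ≤ 4)]
    simp [ENNReal.toReal_natCast]
    ring
  -- numeric estimate
  have hball := GridApprox.unitBallVol_ge (d := d) (le_trans one_le_two hd)
  have hd0 : (0:ℝ) < d := by
    have : (0:ℕ) < d := lt_of_lt_of_le Nat.zero_lt_two hd
    exact_mod_cast this
  have hsqd2 : Real.sqrt 2 ≤ Real.sqrt d := Real.sqrt_le_sqrt (by exact_mod_cast hd)
  have h43 : (4:ℝ)/3 ≤ Real.sqrt 2 := by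
    rw [show (4:ℝ)/3 = Real.sqrt ((4/3)^2) from (Real.sqrt_sq (by norm_num)).symm]
    apply Real.sqrt_le_sqrt
    norm_num
  have h4le : (4:ℝ) ≤ 3 * Real.sqrt d := by nlinarith [hsqd2, h43]
  have hkey : (d:ℝ) * 4 ^ (d - 1) ≤ (d:ℝ)^(d+1) * (3/2)^d * unitBallVol d := by
    have c1 : (4:ℝ)^(d-1) ≤ 4^d := pow_le_pow_right₀ (by norm_num) (Nat.sub_le d 1)
    have c2 : (4:ℝ)^d ≤ (3*Real.sqrt d)^d := pow_le_pow_left₀ (by norm_num) h4le d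
    have c3 : (3*Real.sqrt d)^d = (d:ℝ)^d * (3/2)^d * (2/Real.sqrt d)^d := by
      rw [← mul_pow, ← mul_pow]
      congr 1
      rw [show (d:ℝ) * (3/2) * (2/Real.sqrt d) = 3 * ((d:ℝ)/Real.sqrt d) from by ring,
        Real.div_sqrt]
    have c4 : (d:ℝ)^d * (3/2)^d * (2/Real.sqrt d)^d ≤ (d:ℝ)^d * (3/2)^d * unitBallVol d :=
      mul_le_mul_of_nonneg_left hball (by positivity)
    calc (d:ℝ) * 4^(d-1) ≤ (d:ℝ) * (3*Real.sqrt d)^d :=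
          mul_le_mul_of_nonneg_left (c1.trans c2) (Nat.cast_nonneg d)
      _ ≤ (d:ℝ) * ((d:ℝ)^d * (3/2)^d * unitBallVol d) :=
          mul_le_mul_of_nonneg_left (le_of_eq_of_le c3 c4) (Nat.cast_nonneg d)
      _ = (d:ℝ)^(d+1) * (3/2)^d * unitBallVol d := by rw [pow_succ]; ring
  have hnum : 2 * ((d:ℝ) * (η * 4 ^ (d - 1)))
      ≤ 2 * (d:ℝ)^(d+1) * (3/2)^d * unitBallVol d / n := by
    rw [hηdef]
    rw [show 2 * ((d:ℝ) * (1/(n:ℝ) * 4 ^ (d - 1))) = 2 * ((d:ℝ) * 4^(d-1)) / n from by ring]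
    rw [show 2 * (d:ℝ)^(d+1) * (3/2)^d * unitBallVol d / n
        = 2 * ((d:ℝ)^(d+1) * (3/2)^d * unitBallVol d) / n from by ring]
    rw [div_le_div_iff_of_pos_right hn0]
    linarith [hkey]
  -- conclude
  refine ⟨Ks, ⟨W, Finset.card_image_le.trans hVcard, hWcube, ?_, hKs⟩, ?_⟩
  · intro w hw i
    obtain ⟨v, hv, rfl⟩ := Finset.mem_image.1 hw
    exact ⟨⌊(n : ℝ) * v i⌋, rfl⟩
  · calc sdVol Ks K = (volume (symmDiff Ks K)).toReal := rfl
      _ ≤ (D + D).toReal := htoReal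
      _ = 2 * ((d:ℝ) * (η * 4 ^ (d - 1))) := hDval
      _ ≤ 2 * (d:ℝ)^(d+1) * (3/2)^d * unitBallVol d / n := hnum
end
end

section
/- Let d ≥ 2 and let R ⊆ ℝ^d be a nonempty polytope, i.e. the convex hull of a nonempty finite set of points. Then there exist nonnegative real numbers L₀, L₁, …, L_d with L₀ = |R| and L_d = β_d such that for every λ ≥ 0, the Lebesgue measure of the λ-dilation R^λ = {x ∈ ℝ^d : dist(x,R) ≤ λ} (equivalently R + λB_d(0,1)) equals ∑_{k=0}^d L_k λ^k. -/
open MeasureTheory Set Real Pointwise ProbabilityTheory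

noncomputable section

open Module
open scoped RealInnerProductSpace ENNReal

namespace SteinerAux

variable {d : ℕ}

local notation "E" => EuclideanSpace ℝ (Fin d)




/-- Normal cone piece: `u` such that every point of `S` attains the max of `⟪u,·⟫` over `V`,
strictly above points outside `S`. -/
def NC (V S : Finset E) : Set E :=
  {u | ∀ v ∈ S, (∀ w ∈ V, ⟪u, w⟫ ≤ ⟪u, v⟫) ∧ ∀ w ∈ V, w ∉ S → ⟪u, w⟫ < ⟪u, v⟫}

/-- The piece of the `lam`-dilation projecting to the "face" `conv S`. -/
def piece (V S : Finset E) (lam : ℝ) : Set E :=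
  (convexHull ℝ (S : Set E)) + ((NC V S \ {0}) ∩ Metric.closedBall 0 lam)

lemma NC_smul_mem {V S : Finset E} {u : E} (hu : u ∈ NC V S) {c : ℝ} (hc : 0 < c) :
    c • u ∈ NC V S := by
  intro v hv
  obtain ⟨h1, h2⟩ := hu v hv
  constructor
  · intro w hw
    rw [real_inner_smul_left, real_inner_smul_left]
    exact mul_le_mul_of_nonneg_left (h1 w hw) hc.le
  · intro w hw hws
    rw [real_inner_smul_left, real_inner_smul_left]
    exact mul_lt_mul_of_pos_left (h2 w hw hws) hc

lemma inner_le_on_hull {S : Finset E} {u : E} {M : ℝ} (h : ∀ v ∈ S, ⟪u, v⟫ ≤ M)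
    {p : E} (hp : p ∈ convexHull ℝ (S : Set E)) : ⟪u, p⟫ ≤ M := by
  obtain ⟨w, hw0, hw1, rfl⟩ := Finset.mem_convexHull'.1 hp
  rw [inner_sum]
  calc ∑ y ∈ S, ⟪u, w y • y⟫ ≤ ∑ y ∈ S, w y * M := by
        refine Finset.sum_le_sum fun y hy => ?_
        rw [real_inner_smul_right]
        exact mul_le_mul_of_nonneg_left (h y hy) (hw0 y hy)
    _ = M := by rw [← Finset.sum_mul, hw1, one_mul]

lemma inner_eq_on_hull {S : Finset E} {u : E} {M : ℝ} (h : ∀ v ∈ S, ⟪u, v⟫ = M)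
    {p : E} (hp : p ∈ convexHull ℝ (S : Set E)) : ⟪u, p⟫ = M := by
  refine le_antisymm (inner_le_on_hull (fun v hv => (h v hv).le) hp) ?_
  have := inner_le_on_hull (u := -u) (M := -M) (S := S)
    (fun v hv => by rw [inner_neg_left, h v hv]) hp
  rw [inner_neg_left] at this
  linarith

/-- On `S`, `⟪u,·⟫` is constant for `u ∈ NC V S`. -/
lemma NC_inner_eq {V S : Finset E} (hSV : S ⊆ V) {u : E} (hu : u ∈ NC V S)
    {v w : E} (hv : v ∈ S) (hw : w ∈ S) : ⟪u, w⟫ = ⟪u, v⟫ :=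
  le_antisymm ((hu v hv).1 w (hSV hw)) ((hu w hw).1 v (hSV hv))

/-- Variational characterization: for `p ∈ conv S`, `u ∈ NC V S`, the point `p`
is the projection of `p + u` onto `conv V`. -/
lemma NC_proj {V S : Finset E} (hSV : S ⊆ V) (hS : S.Nonempty) {p u : E}
    (hp : p ∈ convexHull ℝ (S : Set E)) (hu : u ∈ NC V S) :
    ∀ q ∈ convexHull ℝ (V : Set E), ⟪u, q - p⟫ ≤ 0 := by
  obtain ⟨v₀, hv₀⟩ := hS
  have hpM : ⟪u, p⟫ = ⟪u, v₀⟫ :=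
    inner_eq_on_hull (fun v hv => NC_inner_eq hSV hu hv₀ hv) hp
  intro q hq
  have hqM : ⟪u, q⟫ ≤ ⟪u, v₀⟫ := inner_le_on_hull (fun w hw => (hu v₀ hv₀).1 w hw) hq
  rw [inner_sub_right]
  linarith

lemma piece_disjoint_hull {V S : Finset E} (hSV : S ⊆ V) (hS : S.Nonempty) {lam : ℝ}
    {x : E} (hx : x ∈ piece V S lam) : x ∉ convexHull ℝ (V : Set E) := by
  obtain ⟨p, hp, u, hu, rfl⟩ := hx
  intro hmem
  have := NC_proj hSV hS hp hu.1.1 _ hmem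
  rw [add_sub_cancel_left] at this
  have h0 : u = 0 := by
    have := real_inner_self_nonpos.mp this
    exact this
  exact hu.1.2 h0

/-- Uniqueness of the decomposition. -/
lemma piece_unique {V S S' : Finset E} (hSV : S ⊆ V) (hS : S.Nonempty)
    (hSV' : S' ⊆ V) (hS' : S'.Nonempty) {p u p' u' : E}
    (hp : p ∈ convexHull ℝ (S : Set E)) (hu : u ∈ NC V S)
    (hp' : p' ∈ convexHull ℝ (S' : Set E)) (hu' : u' ∈ NC V S')
    (heq : p + u = p' + u') : p = p' ∧ u = u' := by
  have hpV : p ∈ convexHull ℝ (V : Set E) := convexHull_mono (by exact_mod_cast hSV) hp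
  have hpV' : p' ∈ convexHull ℝ (V : Set E) := convexHull_mono (by exact_mod_cast hSV') hp'
  have h1 : ⟪u, p' - p⟫ ≤ 0 := NC_proj hSV hS hp hu _ hpV'
  have h2 : ⟪u', p - p'⟫ ≤ 0 := NC_proj hSV' hS' hp' hu' _ hpV
  have hsub : u' - u = p - p' := by
    have h : (p + u) - (p' + u) = (p' + u') - (p' + u) := by rw [heq]
    rw [add_sub_add_right_eq_sub] at h
    rw [h]; abel
  have key : ⟪p - p', p - p'⟫ ≤ 0 := by
    have : ⟪u' - u, p - p'⟫ ≤ 0 := by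
      rw [inner_sub_left]
      have h1' : -⟪u, p - p'⟫ ≤ 0 := by
        rw [← inner_neg_right, neg_sub]; exact h1
      linarith [h1, h2]
    rwa [hsub] at this
  have hpp : p - p' = 0 := by
    have := real_inner_self_nonpos.mp key
    exact this
  have hp'' : p = p' := by rwa [sub_eq_zero] at hpp
  refine ⟨hp'', ?_⟩
  have := heq
  rw [hp''] at this
  exact add_left_cancel this

/-- The exposed subset is determined by `u`. -/
lemma NC_eq_of_mem {V S S' : Finset E} (hSV : S ⊆ V) (hS : S.Nonempty)
    (hSV' : S' ⊆ V) (hS' : S'.Nonempty) {u : E}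
    (hu : u ∈ NC V S) (hu' : u ∈ NC V S') : S = S' := by
  ext w
  constructor
  · intro hw
    by_contra hw'
    obtain ⟨v', hv'⟩ := hS'
    have h1 : ⟪u, w⟫ < ⟪u, v'⟫ := (hu' v' hv').2 w (hSV hw) hw'
    have h2 : ⟪u, v'⟫ ≤ ⟪u, w⟫ := (hu w hw).1 v' (hSV' hv')
    linarith
  · intro hw
    by_contra hw'
    obtain ⟨v, hv⟩ := hS
    have h1 : ⟪u, w⟫ < ⟪u, v⟫ := (hu v hv).2 w (hSV' hw) hw'
    have h2 : ⟪u, v⟫ ≤ ⟪u, w⟫ := (hu' w hw).1 v (hSV hv)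
    linarith







open Classical in
def subs (V : Finset E) : Finset (Finset E) := V.powerset.filter (fun S => S ≠ ∅)

lemma mem_subs {V S : Finset E} : S ∈ subs V ↔ S ⊆ V ∧ S.Nonempty := by
  simp [subs, Finset.mem_filter, Finset.mem_powerset, Finset.nonempty_iff_ne_empty]

/-- `u` belongs to the normal cone of its argmax set. -/
lemma argmax_spec (V : Finset E) (hV : V.Nonempty) (u : E) :
    ∃ S ∈ subs V, u ∈ NC V S ∧
      ∀ v ∈ S, ⟪u, v⟫ = V.sup' hV (fun v => ⟪u, v⟫) := by
  classical
  set M := V.sup' hV (fun v => ⟪u, v⟫) with hM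
  refine ⟨V.filter (fun v => ⟪u, v⟫ = M), ?_, ?_, ?_⟩
  · rw [mem_subs]
    refine ⟨Finset.filter_subset _ _, ?_⟩
    obtain ⟨v, hv, hveq⟩ := V.exists_mem_eq_sup' hV (fun v => ⟪u, v⟫)
    exact ⟨v, Finset.mem_filter.2 ⟨hv, hveq.symm⟩⟩
  · intro v hv
    rw [Finset.mem_filter] at hv
    constructor
    · intro w hw
      rw [hv.2]
      exact Finset.le_sup' _ hw
    · intro w hw hwS
      rw [hv.2]
      have h1 : ⟪u, w⟫ ≤ M := Finset.le_sup' _ hw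
      have h2 : ⟪u, w⟫ ≠ M := by
        intro h
        exact hwS (Finset.mem_filter.2 ⟨hw, h⟩)
      exact lt_of_le_of_ne h1 h2
  · intro v hv
    exact (Finset.mem_filter.1 hv).2

/-- The covering step: any point of the dilation not in the hull lies in some piece. -/
lemma exists_piece_mem (V : Finset E) (hV : V.Nonempty) {lam : ℝ} {x y w : E}
    (hy : y ∈ convexHull ℝ (V : Set E)) (hw : ‖w‖ ≤ lam) (hx : x = y + w)
    (hxn : x ∉ convexHull ℝ (V : Set E)) :
    ∃ S ∈ subs V, x ∈ piece V S lam := by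
  classical
  set K := convexHull ℝ (V : Set E) with hK
  have hKconv : Convex ℝ K := convex_convexHull ℝ _
  have hKcompact : IsCompact K := V.finite_toSet.isCompact_convexHull ℝ
  have hKne : K.Nonempty := ⟨y, hy⟩
  obtain ⟨p, hpK, hpmin⟩ :=
    exists_norm_eq_iInf_of_complete_convex hKne hKcompact.isComplete hKconv x
  have hchar : ∀ q ∈ K, ⟪x - p, q - p⟫ ≤ 0 :=
    (norm_eq_iInf_iff_real_inner_le_zero hKconv hpK).1 hpmin
  set u := x - p with hu
  have hune : u ≠ 0 := by
    intro h
    apply hxn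
    have : x = p := by rwa [sub_eq_zero] at h
    rwa [this]
  have hulam : ‖u‖ ≤ lam := by
    have hbdd : BddBelow (Set.range fun w : K => ‖x - w‖) :=
      ⟨0, Set.forall_mem_range.2 fun _ => norm_nonneg _⟩
    have : (⨅ w : K, ‖x - w‖) ≤ ‖x - y‖ := ciInf_le hbdd ⟨y, hy⟩
    rw [← hpmin] at this
    calc ‖u‖ = ‖x - p‖ := rfl
      _ ≤ ‖x - y‖ := by rw [hpmin]; exact ciInf_le hbdd ⟨y, hy⟩
      _ = ‖w‖ := by rw [hx]; congr 1; abel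
      _ ≤ lam := hw
  obtain ⟨S, hSsubs, huNC, hSM⟩ := argmax_spec V hV u
  set M := V.sup' hV (fun v => ⟪u, v⟫) with hM
  obtain ⟨hSV, hSne⟩ := mem_subs.1 hSsubs
  -- `⟪u, p⟫ = M`
  have hpMge : M ≤ ⟪u, p⟫ := by
    refine Finset.sup'_le hV _ fun v hv => ?_
    have := hchar v (subset_convexHull ℝ _ hv)
    rw [inner_sub_right] at this
    linarith
  have hpMle : ⟪u, p⟫ ≤ M := by
    obtain ⟨wt, hwt0, hwt1, hwts⟩ := Finset.mem_convexHull'.1 hpK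
    rw [← hwts, inner_sum]
    calc ∑ v ∈ V, ⟪u, wt v • v⟫ ≤ ∑ v ∈ V, wt v * M := by
          refine Finset.sum_le_sum fun v hv => ?_
          rw [real_inner_smul_right]
          exact mul_le_mul_of_nonneg_left (Finset.le_sup' _ hv) (hwt0 v hv)
      _ = M := by rw [← Finset.sum_mul, hwt1, one_mul]
  have hpM : ⟪u, p⟫ = M := le_antisymm hpMle hpMge
  -- `p ∈ convexHull S`
  obtain ⟨wt, hwt0, hwt1, hwts⟩ := Finset.mem_convexHull'.1 hpK
  have hinner : ∑ v ∈ V, wt v * ⟪u, v⟫ = M := by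
    rw [← hpM, ← hwts, inner_sum]
    refine Finset.sum_congr rfl fun v hv => ?_
    rw [real_inner_smul_right]
  have hzero : ∀ v ∈ V, v ∉ S → wt v = 0 := by
    have hsum0 : ∑ v ∈ V, wt v * (M - ⟪u, v⟫) = 0 := by
      have : ∑ v ∈ V, wt v * (M - ⟪u, v⟫)
          = (∑ v ∈ V, wt v) * M - ∑ v ∈ V, wt v * ⟪u, v⟫ := by
        rw [Finset.sum_mul, ← Finset.sum_sub_distrib]
        refine Finset.sum_congr rfl fun v hv => by ring
      rw [this, hwt1, one_mul, hinner, sub_self]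
    have hnn : ∀ v ∈ V, 0 ≤ wt v * (M - ⟪u, v⟫) := fun v hv =>
      mul_nonneg (hwt0 v hv) (sub_nonneg.2 (Finset.le_sup' _ hv))
    have := (Finset.sum_eq_zero_iff_of_nonneg hnn).1 hsum0
    intro v hv hvS
    have hlt : ⟪u, v⟫ < M := by
      obtain ⟨v₀, hv₀⟩ := hSne
      have := (huNC v₀ hv₀).2 v hv hvS
      rwa [hSM v₀ hv₀] at this
    have := this v hv
    rcases mul_eq_zero.1 this with h | h
    · exact h
    · exfalso; rw [sub_eq_zero] at h; exact absurd h.symm (ne_of_lt hlt)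
  have hpS : p ∈ convexHull ℝ (S : Set E) := by
    refine Finset.mem_convexHull'.2 ⟨wt, fun v hv => hwt0 v (hSV hv), ?_, ?_⟩
    · rw [← hwt1]
      exact Finset.sum_subset hSV (fun v hv hvS => hzero v hv hvS)
    · rw [← hwts]
      exact Finset.sum_subset hSV (fun v hv hvS => by rw [hzero v hv hvS, zero_smul])
  refine ⟨S, hSsubs, p, hpS, u, ⟨⟨huNC, by simpa using hune⟩, ?_⟩, by rw [hu]; module⟩
  simpa [mem_closedBall_iff_norm] using hulam

/-- Measurability of normal cones. -/
lemma measurableSet_NC (V S : Finset E) : MeasurableSet (NC V S) := by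
  classical
  have hrw : NC V S =
      ⋂ v ∈ (S : Set E), ((⋂ w ∈ (V : Set E), {u : E | ⟪u, w⟫ ≤ ⟪u, v⟫}) ∩
        ⋂ w ∈ ((V : Set E) \ (S : Set E)), {u : E | ⟪u, w⟫ < ⟪u, v⟫}) := by
    ext u
    simp only [NC, mem_setOf_eq, mem_iInter, mem_inter_iff, mem_diff, Finset.mem_coe]
    constructor
    · intro h v hv
      exact ⟨fun w hw => (h v hv).1 w hw, fun w hw => (h v hv).2 w hw.1 hw.2⟩
    · intro h v hv
      exact ⟨fun w hw => (h v hv).1 w hw, fun w hw hwS => (h v hv).2 w ⟨hw, hwS⟩⟩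
  rw [hrw]
  have hc : ∀ w v : E, Continuous fun u : E => ⟪u, w⟫ - ⟪u, v⟫ := fun w v => by
    exact ((continuous_id.inner continuous_const).sub (continuous_id.inner continuous_const))
  refine MeasurableSet.biInter (S.finite_toSet.countable) fun v hv => ?_
  refine MeasurableSet.inter ?_ ?_
  · refine MeasurableSet.biInter (V.finite_toSet.countable) fun w hw => ?_
    exact (isClosed_le (continuous_id.inner continuous_const)
      (continuous_id.inner continuous_const)).measurableSet
  · refine MeasurableSet.biInter (V.finite_toSet.diff.countable) fun w hw => ?_
    exact (isOpen_lt (continuous_id.inner continuous_const)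
      (continuous_id.inner continuous_const)).measurableSet

/-- Linear span of differences of `S`. -/
def Wspan (S : Finset E) : Submodule ℝ E :=
  Submodule.span ℝ ((S : Set E) - (S : Set E))

lemma hull_sub_mem_Wspan {S : Finset E} {p v₀ : E} (hv₀ : v₀ ∈ S)
    (hp : p ∈ convexHull ℝ (S : Set E)) : p - v₀ ∈ Wspan S := by
  obtain ⟨wt, hwt0, hwt1, hwts⟩ := Finset.mem_convexHull'.1 hp
  have : p - v₀ = ∑ v ∈ S, wt v • (v - v₀) := by
    rw [← hwts]
    simp only [smul_sub, Finset.sum_sub_distrib, ← Finset.sum_smul, hwt1, one_smul]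
  rw [this]
  refine Submodule.sum_mem _ fun v hv => Submodule.smul_mem _ _ (Submodule.subset_span ?_)
  exact Set.sub_mem_sub (Finset.mem_coe.2 hv) (Finset.mem_coe.2 hv₀)

lemma NC_subset_orth {V S : Finset E} (hSV : S ⊆ V) : NC V S ⊆ ((Wspan S)ᗮ : Set E) := by
  intro u hu
  rw [SetLike.mem_coe, Submodule.mem_orthogonal']
  intro x hx
  induction hx using Submodule.span_induction with
  | mem x hx =>
      obtain ⟨a, ha, b, hb, rfl⟩ := hx
      rw [inner_sub_right]
      have h1 : ⟪u, a⟫ ≤ ⟪u, b⟫ := (hu b hb).1 a (hSV ha)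
      have h2 : ⟪u, b⟫ ≤ ⟪u, a⟫ := (hu a ha).1 b (hSV hb)
      rw [le_antisymm h1 h2, sub_self]
  | zero => rw [inner_zero_right]
  | add x y _ _ hx hy => rw [inner_add_right, hx, hy, add_zero]
  | smul c x _ hx => rw [real_inner_smul_right, hx, mul_zero]

lemma Wspan_eq_bot_iff {S : Finset E} (hS : S.Nonempty) :
    Wspan S = ⊥ ↔ ∃ v, S = {v} := by
  constructor
  · intro h
    obtain ⟨v, hv⟩ := hS
    refine ⟨v, Finset.eq_singleton_iff_unique_mem.2 ⟨hv, fun w hw => ?_⟩⟩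
    have := Submodule.span_eq_bot.1 h (w - v)
      (Set.sub_mem_sub (Finset.mem_coe.2 hw) (Finset.mem_coe.2 hv))
    rwa [sub_eq_zero] at this
  · rintro ⟨v, rfl⟩
    rw [Wspan]
    have : ((({v} : Finset E) : Set E) - (({v} : Finset E) : Set E)) = {0} := by
      simp [Set.singleton_sub_singleton]
    rw [this, Submodule.span_singleton_eq_bot.2 rfl]







/-- Product-volume lemma: if `A ⊆ W` is compact and `C ⊆ Wᗮ` is measurable, then `A + C` is
measurable and its volume factors as `a * (m-dimensional volume of C in coordinates)`. -/
lemma prod_lemma (W : Submodule ℝ E) {A : Set E} (hA : A ⊆ (W : Set E)) (hAc : IsCompact A) :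
    ∃ a : ℝ≥0∞, a ≠ ⊤ ∧
      ∃ g : Fin (finrank ℝ (Wᗮ : Submodule ℝ E)) → E, Orthonormal ℝ g ∧
        ∀ C : Set E, C ⊆ (Wᗮ : Set E) → MeasurableSet C →
          MeasurableSet (A + C) ∧
          volume (A + C) = a *
            volume {z : Fin (finrank ℝ (Wᗮ : Submodule ℝ E)) → ℝ | (∑ j, z j • g j) ∈ C} := by
  classical
  set k := finrank ℝ W with hk
  set m := finrank ℝ (Wᗮ : Submodule ℝ E) with hm
  set bW : OrthonormalBasis (Fin k) ℝ W := stdOrthonormalBasis ℝ W with hbW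
  set bO : OrthonormalBasis (Fin m) ℝ (Wᗮ : Submodule ℝ E) := stdOrthonormalBasis ℝ Wᗮ with hbO
  set v : Fin k ⊕ Fin m → E := Sum.elim (fun i => (bW i : E)) (fun j => (bO j : E)) with hv
  have hmemW : ∀ i, v (Sum.inl i) ∈ W := fun i => (bW i).2
  have hmemO : ∀ j, v (Sum.inr j) ∈ Wᗮ := fun j => (bO j).2
  -- orthonormality
  have hon : Orthonormal ℝ v := by
    rw [orthonormal_iff_ite]
    rintro (i | i) (j | j)
    · have h := orthonormal_iff_ite.1 bW.orthonormal i j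
      rw [Submodule.coe_inner] at h
      simpa [hv] using h
    · simpa using Submodule.inner_right_of_mem_orthogonal (hmemW i) (hmemO j)
    · simpa using Submodule.inner_left_of_mem_orthogonal (hmemW j) (hmemO i)
    · have h := orthonormal_iff_ite.1 bO.orthonormal i j
      rw [Submodule.coe_inner] at h
      simpa [hv] using h
  -- spanning
  have hsp : ⊤ ≤ Submodule.span ℝ (Set.range v) := by
    intro x _
    obtain ⟨y, hy, z, hz, rfl⟩ := W.exists_add_mem_mem_orthogonal x
    have hyspan : y ∈ Submodule.span ℝ (Set.range v) := by
      have hrep : (⟨y, hy⟩ : W) = ∑ i, bW.repr ⟨y, hy⟩ i • bW i := (bW.sum_repr ⟨y, hy⟩).symm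
      have : y = ∑ i, bW.repr ⟨y, hy⟩ i • (bW i : E) := by
        conv_lhs => rw [show y = ((⟨y, hy⟩ : W) : E) from rfl, hrep]
        push_cast
        rfl
      rw [this]
      exact Submodule.sum_mem _ fun i _ => Submodule.smul_mem _ _
        (Submodule.subset_span ⟨Sum.inl i, rfl⟩)
    have hzspan : z ∈ Submodule.span ℝ (Set.range v) := by
      have hrep : (⟨z, hz⟩ : (Wᗮ : Submodule ℝ E)) = ∑ j, bO.repr ⟨z, hz⟩ j • bO j :=
        (bO.sum_repr ⟨z, hz⟩).symm
      have : z = ∑ j, bO.repr ⟨z, hz⟩ j • (bO j : E) := by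
        conv_lhs => rw [show z = ((⟨z, hz⟩ : (Wᗮ : Submodule ℝ E)) : E) from rfl, hrep]
        push_cast
        rfl
      rw [this]
      exact Submodule.sum_mem _ fun j _ => Submodule.smul_mem _ _
        (Submodule.subset_span ⟨Sum.inr j, rfl⟩)
    exact Submodule.add_mem _ hyspan hzspan
  set b : OrthonormalBasis (Fin k ⊕ Fin m) ℝ E := OrthonormalBasis.mk hon hsp with hb
  have hbcoe : ∀ i, b i = v i := fun i => by rw [hb, OrthonormalBasis.coe_mk]
  -- the two "projections"
  set pW : E → E := fun x => ∑ i : Fin k, ⟪v (Sum.inl i), x⟫ • v (Sum.inl i) with hpW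
  set pO : E → E := fun x => ∑ j : Fin m, ⟪v (Sum.inr j), x⟫ • v (Sum.inr j) with hpO
  have hsum : ∀ x : E, pW x + pO x = x := by
    intro x
    have := b.sum_repr' x
    rw [Fintype.sum_sum_type] at this
    simp_rw [hbcoe] at this
    exact this
  have hpW_W : ∀ x, x ∈ W → pW x = x ∧ pO x = 0 := by
    intro x hx
    have h0 : pO x = 0 := by
      rw [hpO]
      refine Finset.sum_eq_zero fun j _ => ?_
      rw [Submodule.inner_left_of_mem_orthogonal hx (hmemO j), zero_smul]
    exact ⟨by have := hsum x; rw [h0, add_zero] at this; exact this, h0⟩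
  have hpW_O : ∀ x, x ∈ Wᗮ → pO x = x ∧ pW x = 0 := by
    intro x hx
    have h0 : pW x = 0 := by
      rw [hpW]
      refine Finset.sum_eq_zero fun i _ => ?_
      rw [Submodule.inner_right_of_mem_orthogonal (hmemW i) hx, zero_smul]
    exact ⟨by have := hsum x; rw [h0, zero_add] at this; exact this, h0⟩
  have hadd : ∀ f : E → E, (f = pW ∨ f = pO) → ∀ x y, f (x + y) = f x + f y := by
    rintro f (rfl | rfl) x y <;>
      simp only [hpW, hpO, inner_add_right, add_smul, Finset.sum_add_distrib]
  -- the measurable equivalence chain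
  set T : E ≃ᵐ ((Fin k → ℝ) × (Fin m → ℝ)) :=
    (b.measurableEquiv.trans (MeasurableEquiv.toLp 2 ((Fin k ⊕ Fin m) → ℝ)).symm).trans
      (MeasurableEquiv.sumPiEquivProdPi (fun _ : Fin k ⊕ Fin m => ℝ)) with hT
  have hTmp : MeasurePreserving T volume volume := by
    have hcoe : ⇑T = (⇑(MeasurableEquiv.sumPiEquivProdPi (fun _ : Fin k ⊕ Fin m => ℝ))) ∘
        (⇑(MeasurableEquiv.toLp 2 ((Fin k ⊕ Fin m) → ℝ)).symm) ∘ ⇑b.measurableEquiv := rfl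
    have h3 : MeasurePreserving (MeasurableEquiv.sumPiEquivProdPi (fun _ : Fin k ⊕ Fin m => ℝ))
        volume volume :=
      (volume_measurePreserving_sumPiEquivProdPi_symm (fun _ : Fin k ⊕ Fin m => ℝ)).symm
        (MeasurableEquiv.sumPiEquivProdPi _).symm
    have h2 := EuclideanSpace.volume_preserving_symm_measurableEquiv_toLp (Fin k ⊕ Fin m)
    have h1 := b.measurePreserving_measurableEquiv
    show MeasurePreserving ⇑T volume volume
    rw [hcoe]
    exact h3.comp (h2.comp h1)
  have hTapply : ∀ x : E, T x = (fun i => ⟪v (Sum.inl i), x⟫, fun j => ⟪v (Sum.inr j), x⟫) := by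
    intro x
    have h1 : ∀ i : Fin k ⊕ Fin m, b.repr x i = ⟪v i, x⟫ := by
      intro i
      rw [← hbcoe]
      exact b.repr_apply_apply x i
    ext1
    · ext i
      simp only [hT, MeasurableEquiv.trans_apply]
      erw [MeasurableEquiv.coe_sumPiEquivProdPi]
      exact h1 (Sum.inl i)
    · ext j
      simp only [hT, MeasurableEquiv.trans_apply]
      erw [MeasurableEquiv.coe_sumPiEquivProdPi]
      exact h1 (Sum.inr j)
  -- the coordinate sets
  set ψ₁ : (Fin k → ℝ) → E := fun z => ∑ i, z i • v (Sum.inl i) with hψ₁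
  set ψ₂ : (Fin m → ℝ) → E := fun z => ∑ j, z j • v (Sum.inr j) with hψ₂
  have hψ₁cont : Continuous ψ₁ :=
    continuous_finset_sum _ fun i _ => (continuous_apply i).smul continuous_const
  have hψ₂cont : Continuous ψ₂ :=
    continuous_finset_sum _ fun j _ => (continuous_apply j).smul continuous_const
  have hcoord₁ : ∀ (z : Fin k → ℝ) (i : Fin k), ⟪v (Sum.inl i), ψ₁ z⟫ = z i := by
    intro z i
    have hrw : ψ₁ z = ∑ t : Fin k ⊕ Fin m, (Sum.elim z (fun _ => (0:ℝ))) t • v t := by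
      rw [Fintype.sum_sum_type]
      simp [hψ₁]
    rw [hrw, hon.inner_right_fintype]
    simp
  have hcoord₂ : ∀ (z : Fin m → ℝ) (j : Fin m), ⟪v (Sum.inr j), ψ₂ z⟫ = z j := by
    intro z j
    have hrw : ψ₂ z = ∑ t : Fin k ⊕ Fin m, (Sum.elim (fun _ => (0:ℝ)) z) t • v t := by
      rw [Fintype.sum_sum_type]
      simp [hψ₂]
    rw [hrw, hon.inner_right_fintype]
    simp
  set A₁ : Set (Fin k → ℝ) := ψ₁ ⁻¹' A with hA₁
  have hA₁meas : MeasurableSet A₁ := hAc.isClosed.measurableSet.preimage hψ₁cont.measurable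
  -- A₁ is bounded hence has finite volume
  have hA₁fin : volume A₁ ≠ ⊤ := by
    obtain ⟨r, hr⟩ := hAc.isBounded.subset_closedBall 0
    have hsub : A₁ ⊆ Metric.closedBall 0 r := by
      intro z hz
      have hz' : ψ₁ z ∈ Metric.closedBall (0 : E) r := hr hz
      rw [Metric.mem_closedBall, dist_zero_right] at hz' ⊢
      rw [pi_norm_le_iff_of_nonneg (le_trans (norm_nonneg _) hz')]
      intro i
      have hzi : z i = ⟪v (Sum.inl i), ψ₁ z⟫ := (hcoord₁ z i).symm
      calc ‖z i‖ = |⟪v (Sum.inl i), ψ₁ z⟫| := by rw [← hzi]; rfl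
        _ ≤ ‖v (Sum.inl i)‖ * ‖ψ₁ z‖ := abs_real_inner_le_norm _ _
        _ = ‖ψ₁ z‖ := by rw [hon.1 (Sum.inl i), one_mul]
        _ ≤ r := hz'
    exact ne_of_lt (lt_of_le_of_lt (measure_mono hsub)
      (isCompact_closedBall _ _).measure_lt_top)
  refine ⟨volume A₁, hA₁fin, fun j => v (Sum.inr j), hon.comp Sum.inr Sum.inr_injective,
    fun C hC hCm => ?_⟩
  set C₁ : Set (Fin m → ℝ) := ψ₂ ⁻¹' C with hC₁
  have hC₁meas : MeasurableSet C₁ := hCm.preimage hψ₂cont.measurable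
  have hψpW : ∀ x : E, ψ₁ (fun i => ⟪v (Sum.inl i), x⟫) = pW x := fun x => rfl
  have hψpO : ∀ x : E, ψ₂ (fun j => ⟪v (Sum.inr j), x⟫) = pO x := fun x => rfl
  have key : A + C = T ⁻¹' (A₁ ×ˢ C₁) := by
    ext x
    constructor
    · rintro ⟨aa, haa, c, hc, rfl⟩
      rw [Set.mem_preimage, hTapply, Set.mem_prod]
      constructor
      · show ψ₁ (fun i => ⟪v (Sum.inl i), aa + c⟫) ∈ A
        rw [hψpW, hadd pW (Or.inl rfl), (hpW_W aa (hA haa)).1, (hpW_O c (hC hc)).2, add_zero]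
        exact haa
      · show ψ₂ (fun j => ⟪v (Sum.inr j), aa + c⟫) ∈ C
        rw [hψpO, hadd pO (Or.inr rfl), (hpW_W aa (hA haa)).2, (hpW_O c (hC hc)).1, zero_add]
        exact hc
    · intro hx
      rw [Set.mem_preimage, hTapply, Set.mem_prod] at hx
      obtain ⟨h1, h2⟩ := hx
      rw [show (fun i => ⟪v (Sum.inl i), x⟫) ∈ A₁ ↔ pW x ∈ A from by rw [hA₁, mem_preimage, hψpW]] at h1
      rw [show (fun j => ⟪v (Sum.inr j), x⟫) ∈ C₁ ↔ pO x ∈ C from by rw [hC₁, mem_preimage, hψpO]] at h2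
      exact ⟨pW x, h1, pO x, h2, hsum x⟩
  have hprodmeas : MeasurableSet (A₁ ×ˢ C₁) := hA₁meas.prod hC₁meas
  constructor
  · rw [key]
    exact T.measurable hprodmeas
  · rw [key, hTmp.measure_preimage hprodmeas.nullMeasurableSet]
    have : (volume : Measure ((Fin k → ℝ) × (Fin m → ℝ))) = (volume : Measure (Fin k → ℝ)).prod volume := by
      rw [Measure.volume_eq_prod]
    rw [this, Measure.prod_prod]
    rfl


/-- `{a} + s` has the same volume as `s`, and translation facts. -/
lemma volume_image_add (p₀ : E) (Z : Set E) :
    (fun x => p₀ + x) '' Z = (fun x => -p₀ + x) ⁻¹' Z := by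
  ext x
  constructor
  · rintro ⟨z, hz, rfl⟩
    simpa using hz
  · intro hx
    exact ⟨-p₀ + x, hx, by module⟩

/-- If the orthogonal complement is trivial, the piece is empty. -/
lemma piece_eq_empty {V S : Finset E} (hSV : S ⊆ V) (h : ((Wspan S)ᗮ : Submodule ℝ E) = ⊥)
    {lam : ℝ} : piece V S lam = ∅ := by
  have hC : (NC V S \ {0}) ∩ Metric.closedBall 0 lam = ∅ := by
    rw [Set.eq_empty_iff_forall_notMem]
    rintro u ⟨⟨hu1, hu2⟩, _⟩
    have : u ∈ ((Wspan S)ᗮ : Set E) := NC_subset_orth hSV hu1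
    rw [h] at this
    simp only [Submodule.bot_coe, Set.mem_singleton_iff] at this
    exact hu2 (by simpa using this)
  rw [piece, hC, Set.add_empty]

/-- Main volume computation for pieces. -/
lemma piece_volume (V S : Finset E) (hSV : S ⊆ V) (hS : S.Nonempty) :
    (∀ lam : ℝ, MeasurableSet (piece V S lam)) ∧
    volume (piece V S 1) ≠ ⊤ ∧
    (∀ lam : ℝ, 0 < lam → volume (piece V S lam) =
      ENNReal.ofReal (lam ^ (finrank ℝ ((Wspan S)ᗮ : Submodule ℝ E))) * volume (piece V S 1)) := by
  classical
  obtain ⟨p₀, hp₀⟩ := hS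
  set W : Submodule ℝ E := Wspan S with hW
  set m := finrank ℝ (Wᗮ : Submodule ℝ E) with hm
  set A : Set E := (fun x => -p₀ + x) '' (convexHull ℝ (S : Set E)) with hA
  have hAc : IsCompact A :=
    (S.finite_toSet.isCompact_convexHull ℝ).image (continuous_const.add continuous_id)
  have hAW : A ⊆ (W : Set E) := by
    rintro _ ⟨p, hp, rfl⟩
    have := hull_sub_mem_Wspan hp₀ hp
    simpa [neg_add_eq_sub] using this
  obtain ⟨a, ha, g, hg, H⟩ := prod_lemma W hAW hAc
  set C : ℝ → Set E := fun lam => (NC V S \ {0}) ∩ Metric.closedBall 0 lam with hC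
  have hCsub : ∀ lam, C lam ⊆ ((Wᗮ : Submodule ℝ E) : Set E) := fun lam x hx =>
    NC_subset_orth hSV hx.1.1
  have hCm : ∀ lam, MeasurableSet (C lam) := fun lam =>
    (((measurableSet_NC V S).diff (measurableSet_singleton 0)).inter measurableSet_closedBall)
  -- the piece is a translate of `A + C lam`
  have hpiece : ∀ lam, piece V S lam = (fun x => p₀ + x) '' (A + C lam) := by
    intro lam
    ext x
    constructor
    · rintro ⟨p, hp, u, hu, rfl⟩
      exact ⟨(-p₀ + p) + u, ⟨-p₀ + p, ⟨p, hp, rfl⟩, u, hu, rfl⟩, by abel⟩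
    · rintro ⟨_, ⟨_, ⟨p, hp, rfl⟩, u, hu, rfl⟩, rfl⟩
      exact ⟨p, hp, u, hu, by simp [← add_assoc]⟩
  have hvol : ∀ lam, volume (piece V S lam) = volume (A + C lam) := by
    intro lam
    rw [hpiece lam, volume_image_add, measure_preimage_add]
  have hmeaspiece : ∀ lam : ℝ, MeasurableSet (piece V S lam) := by
    intro lam
    rw [hpiece lam, volume_image_add]
    exact ((H (C lam) (hCsub lam) (hCm lam)).1).preimage
      (continuous_const.add continuous_id).measurable
  -- coordinates map
  set ψ : (Fin m → ℝ) → E := fun z => ∑ j, z j • g j with hψ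
  have hψlin : ∀ (c : ℝ) (z : Fin m → ℝ), ψ (c • z) = c • ψ z := by
    intro c z
    rw [hψ, Finset.smul_sum]
    refine Finset.sum_congr rfl fun j _ => ?_
    simp [smul_smul]
  -- scaling of cones
  have hCscale : ∀ lam : ℝ, 0 < lam → C lam = lam • C 1 := by
    intro lam hlam
    ext x
    constructor
    · rintro ⟨⟨hx1, hx2⟩, hx3⟩
      refine ⟨lam⁻¹ • x, ⟨⟨NC_smul_mem hx1 (by positivity), ?_⟩, ?_⟩, smul_inv_smul₀ (ne_of_gt hlam) x⟩
      · intro h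
        rw [Set.mem_singleton_iff, smul_eq_zero] at h
        rcases h with h | h
        · exact absurd h (ne_of_gt (inv_pos.2 hlam))
        · exact hx2 (by simp [h])
      · rw [Metric.mem_closedBall, dist_zero_right] at hx3 ⊢
        rw [norm_smul, Real.norm_eq_abs, abs_of_pos (inv_pos.2 hlam)]
        rw [inv_mul_le_iff₀ hlam, mul_one]
        exact hx3
    · rintro ⟨y, ⟨⟨hy1, hy2⟩, hy3⟩, rfl⟩
      refine ⟨⟨NC_smul_mem hy1 hlam, ?_⟩, ?_⟩
      · intro h
        rw [Set.mem_singleton_iff, smul_eq_zero] at h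
        rcases h with h | h
        · exact absurd h (ne_of_gt hlam)
        · exact hy2 (by simp [h])
      · rw [Metric.mem_closedBall, dist_zero_right] at hy3 ⊢
        rw [norm_smul, Real.norm_eq_abs, abs_of_pos hlam]
        calc lam * ‖y‖ ≤ lam * 1 := by
              exact mul_le_mul_of_nonneg_left hy3 hlam.le
          _ = lam := mul_one lam
  -- scaling in coordinates
  have hνscale : ∀ lam : ℝ, 0 < lam →
      {z : Fin m → ℝ | ψ z ∈ C lam} = lam • {z : Fin m → ℝ | ψ z ∈ C 1} := by
    intro lam hlam
    rw [hCscale lam hlam]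
    ext z
    rw [Set.mem_setOf_eq, Set.mem_smul_set_iff_inv_smul_mem₀ (ne_of_gt hlam),
      Set.mem_smul_set_iff_inv_smul_mem₀ (ne_of_gt hlam), Set.mem_setOf_eq, ← hψlin]
  -- finiteness of the coordinate cone volume
  have hνfin : volume {z : Fin m → ℝ | ψ z ∈ C 1} ≠ ⊤ := by
    have hsub : {z : Fin m → ℝ | ψ z ∈ C 1} ⊆ Metric.closedBall 0 1 := by
      intro z hz
      have hz' : ‖ψ z‖ ≤ 1 := by
        have := hz.2
        rwa [Metric.mem_closedBall, dist_zero_right] at this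
      rw [Metric.mem_closedBall, dist_zero_right]
      rw [pi_norm_le_iff_of_nonneg zero_le_one]
      intro j
      calc ‖z j‖ = |⟪g j, ψ z⟫| := by rw [hψ, hg.inner_right_fintype]; rfl
        _ ≤ ‖g j‖ * ‖ψ z‖ := abs_real_inner_le_norm _ _
        _ = ‖ψ z‖ := by rw [hg.1 j, one_mul]
        _ ≤ 1 := hz'
    exact ne_of_lt (lt_of_le_of_lt (measure_mono hsub)
      (isCompact_closedBall _ _).measure_lt_top)
  refine ⟨hmeaspiece, ?_, ?_⟩
  · rw [hvol 1, (H (C 1) (hCsub 1) (hCm 1)).2]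
    exact ENNReal.mul_ne_top ha hνfin
  · intro lam hlam
    rw [hvol lam, hvol 1, (H (C lam) (hCsub lam) (hCm lam)).2, (H (C 1) (hCsub 1) (hCm 1)).2]
    have : volume {z : Fin m → ℝ | ψ z ∈ C lam}
        = ENNReal.ofReal (lam ^ m) * volume {z : Fin m → ℝ | ψ z ∈ C 1} := by
      rw [hνscale lam hlam, Measure.addHaar_smul_of_nonneg volume hlam.le]
      congr 2
      simp [Module.finrank_fintype_fun_eq_card]
    rw [this]
    ring



/-- Decomposition of the volume of the dilation. -/
lemma dilation_decomp (V : Finset E) (hV : V.Nonempty) {lam : ℝ} (hlam : 0 ≤ lam) :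
    volume (convexHull ℝ (V : Set E) + Metric.closedBall 0 lam)
      = volume (convexHull ℝ (V : Set E)) + ∑ S ∈ subs V, volume (piece V S lam) := by
  classical
  set K := convexHull ℝ (V : Set E) with hK
  have hKc : IsCompact K := V.finite_toSet.isCompact_convexHull ℝ
  have hpm : ∀ S ∈ subs V, MeasurableSet (piece V S lam) := by
    intro S hS
    obtain ⟨hSV, hSne⟩ := mem_subs.1 hS
    exact (piece_volume V S hSV hSne).1 lam
  have hcover : K + Metric.closedBall 0 lam = K ∪ ⋃ S ∈ subs V, piece V S lam := by
    apply Set.Subset.antisymm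
    · rintro x ⟨y, hy, w, hw, rfl⟩
      by_cases hx : y + w ∈ K
      · exact Or.inl hx
      · refine Or.inr ?_
        have hwn : ‖w‖ ≤ lam := by rwa [Metric.mem_closedBall, dist_zero_right] at hw
        obtain ⟨S, hS, hmem⟩ := exists_piece_mem V hV hy hwn rfl hx
        exact Set.mem_biUnion hS hmem
    · rintro x (hx | hx)
      · exact ⟨x, hx, 0, by simpa [Metric.mem_closedBall] using hlam, add_zero x⟩
      · obtain ⟨S, hS, p, hp, u, hu, rfl⟩ := by
          simpa only [Set.mem_iUnion, exists_prop, piece, Set.mem_add] using hx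
        obtain ⟨hSV, _⟩ := mem_subs.1 hS
        exact ⟨p, convexHull_mono (by exact_mod_cast hSV) hp, u, hu.2, rfl⟩
  have hdisjK : Disjoint K (⋃ S ∈ subs V, piece V S lam) := by
    rw [Set.disjoint_right]
    intro x hx
    obtain ⟨S, hS, hmem⟩ := Set.mem_iUnion₂.1 hx
    obtain ⟨hSV, hSne⟩ := mem_subs.1 hS
    exact fun hxK => piece_disjoint_hull hSV hSne hmem hxK
  have hdisj2 : Set.PairwiseDisjoint ↑(subs V) (fun S => piece V S lam) := by
    intro S hS S' hS' hne
    obtain ⟨hSV, hSne⟩ := mem_subs.1 (Finset.mem_coe.1 hS)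
    obtain ⟨hSV', hSne'⟩ := mem_subs.1 (Finset.mem_coe.1 hS')
    refine Set.disjoint_left.2 fun x hx hx' => ?_
    obtain ⟨p, hp, u, hu, hxe⟩ := hx
    obtain ⟨p', hp', u', hu', hxe'⟩ := hx'
    have huniq := piece_unique hSV hSne hSV' hSne' hp hu.1.1 hp' hu'.1.1 (hxe.trans hxe'.symm)
    refine hne (NC_eq_of_mem hSV hSne hSV' hSne' hu.1.1 ?_)
    rw [huniq.2]
    exact hu'.1.1
  rw [hcover, measure_union hdisjK (Finset.measurableSet_biUnion _ hpm),
    measure_biUnion_finset hdisj2 hpm]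

/-- Decomposition of the unit ball along the normal cones. -/
lemma ball_decomp (V : Finset E) (hV : V.Nonempty) (hd : 1 ≤ d) :
    volume (Metric.closedBall (0 : E) 1)
      = ∑ S ∈ subs V, volume ((NC V S \ {0}) ∩ Metric.closedBall 0 1) := by
  classical
  haveI : Nonempty (Fin d) := ⟨⟨0, by omega⟩⟩
  have hm : ∀ S ∈ subs V, MeasurableSet ((NC V S \ {0}) ∩ Metric.closedBall (0:E) 1) :=
    fun S _ => ((measurableSet_NC V S).diff (measurableSet_singleton 0)).inter
      measurableSet_closedBall
  have hcover : Metric.closedBall (0 : E) 1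
      = {0} ∪ ⋃ S ∈ subs V, ((NC V S \ {0}) ∩ Metric.closedBall 0 1) := by
    apply Set.Subset.antisymm
    · intro x hx
      by_cases hx0 : x = 0
      · exact Or.inl (by simp [hx0])
      · obtain ⟨S, hS, hNC, _⟩ := argmax_spec V hV x
        exact Or.inr (Set.mem_biUnion hS ⟨⟨hNC, by simpa using hx0⟩, hx⟩)
    · rintro x (hx | hx)
      · simp only [Set.mem_singleton_iff] at hx
        simp [hx]
      · obtain ⟨S, _, hmem⟩ := Set.mem_iUnion₂.1 hx
        exact hmem.2
  have hdisj0 : Disjoint ({0} : Set E) (⋃ S ∈ subs V, ((NC V S \ {0}) ∩ Metric.closedBall 0 1)) := by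
    rw [Set.disjoint_right]
    intro x hx
    obtain ⟨S, _, hmem⟩ := Set.mem_iUnion₂.1 hx
    intro h0
    exact hmem.1.2 (by simpa using h0)
  have hdisj2 : Set.PairwiseDisjoint ↑(subs V)
      (fun S => (NC V S \ {0}) ∩ Metric.closedBall (0:E) 1) := by
    intro S hS S' hS' hne
    obtain ⟨hSV, hSne⟩ := mem_subs.1 (Finset.mem_coe.1 hS)
    obtain ⟨hSV', hSne'⟩ := mem_subs.1 (Finset.mem_coe.1 hS')
    refine Set.disjoint_left.2 fun x hx hx' => ?_
    exact hne (NC_eq_of_mem hSV hSne hSV' hSne' hx.1.1 hx'.1.1)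
  conv_lhs => rw [hcover]
  rw [measure_union hdisj0 (Finset.measurableSet_biUnion _ hm),
    measure_biUnion_finset hdisj2 hm, measure_singleton, zero_add]

/-- Singleton pieces have the volume of their normal cone. -/
lemma piece_singleton_volume (V : Finset E) (v : E) {lam : ℝ} :
    volume (piece V {v} lam) = volume ((NC V {v} \ {0}) ∩ Metric.closedBall 0 lam) := by
  have : piece V {v} lam = (fun x => v + x) '' ((NC V {v} \ {0}) ∩ Metric.closedBall 0 lam) := by
    rw [piece]
    have h1 : (convexHull ℝ (({v} : Finset E) : Set E)) = {v} := by
      simp [convexHull_singleton]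
    rw [h1, Set.singleton_add]
  rw [this, volume_image_add, measure_preimage_add]

end SteinerAux

open SteinerAux in
/-- **Lemma 5** (Steiner formula for polytopes) : the volume of the `λ`-dilation
`R + λ B_d(0,1)` of a nonempty polytope `R` is a polynomial of degree `d` in `λ ≥ 0`,
with nonnegative coefficients, constant coefficient `|R|` and leading coefficient `β_d`. -/
theorem steiner_formula_polytope (d : ℕ) (hd : 2 ≤ d)
    (V : Finset (EuclideanSpace ℝ (Fin d))) (hV : V.Nonempty)
    (R : Set (EuclideanSpace ℝ (Fin d)))
    (hR : R = convexHull ℝ (V : Set (EuclideanSpace ℝ (Fin d)))) :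
    ∃ L : ℕ → ℝ, (∀ k, k ≤ d → 0 ≤ L k) ∧
      L 0 = (volume R).toReal ∧ L d = unitBallVol d ∧
      ∀ lam : ℝ, 0 ≤ lam →
        (volume (R + lam • Metric.closedBall (0 : EuclideanSpace ℝ (Fin d)) 1)).toReal
          = ∑ k ∈ Finset.range (d + 1), L k * lam ^ k := by
  classical
  haveI : Nonempty (Fin d) := ⟨⟨0, by omega⟩⟩
  set K := convexHull ℝ (V : Set (EuclideanSpace ℝ (Fin d))) with hK
  have hKc : IsCompact K := V.finite_toSet.isCompact_convexHull ℝ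
  have hKfin : volume K ≠ ⊤ := hKc.measure_lt_top.ne
  set cod : Finset (EuclideanSpace ℝ (Fin d)) → ℕ :=
    fun S => Module.finrank ℝ ((Wspan S)ᗮ : Submodule ℝ (EuclideanSpace ℝ (Fin d))) with hcod
  set t : Finset (EuclideanSpace ℝ (Fin d)) → ℝ≥0∞ := fun S => volume (piece V S 1) with ht
  have htne : ∀ S ∈ subs V, t S ≠ ⊤ := by
    intro S hS
    obtain ⟨hSV, hSne⟩ := mem_subs.1 hS
    exact (piece_volume V S hSV hSne).2.1
  have hrank : ∀ S : Finset (EuclideanSpace ℝ (Fin d)),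
      Module.finrank ℝ (Wspan S : Submodule ℝ (EuclideanSpace ℝ (Fin d))) + cod S = d := by
    intro S
    rw [hcod]
    rw [(Wspan S).finrank_add_finrank_orthogonal, finrank_euclideanSpace_fin]
  have hcodle : ∀ S : Finset (EuclideanSpace ℝ (Fin d)), cod S ≤ d := fun S =>
    le_of_add_le_right (le_of_eq (hrank S))
  have hzero : ∀ S ∈ subs V, cod S = 0 → t S = 0 := by
    intro S hS h0
    obtain ⟨hSV, _⟩ := mem_subs.1 hS
    have : ((Wspan S)ᗮ : Submodule ℝ (EuclideanSpace ℝ (Fin d))) = ⊥ :=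
      Submodule.finrank_eq_zero.1 h0
    show volume (piece V S 1) = 0
    rw [piece_eq_empty hSV this, measure_empty]
  have hsing : ∀ S ∈ subs V, (cod S = d ↔ ∃ v, S = {v}) := by
    intro S hS
    obtain ⟨hSV, hSne⟩ := mem_subs.1 hS
    constructor
    · intro h
      have h0 : Module.finrank ℝ (Wspan S : Submodule ℝ (EuclideanSpace ℝ (Fin d))) = 0 := by
        have := hrank S
        omega
      exact (Wspan_eq_bot_iff hSne).1 (Submodule.finrank_eq_zero.1 h0)
    · intro h
      have hbot : (Wspan S : Submodule ℝ (EuclideanSpace ℝ (Fin d))) = ⊥ :=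
        (Wspan_eq_bot_iff hSne).2 h
      show Module.finrank ℝ ((Wspan S)ᗮ : Submodule ℝ (EuclideanSpace ℝ (Fin d))) = d
      rw [hbot, Submodule.bot_orthogonal_eq_top, finrank_top, finrank_euclideanSpace_fin]
  set L : ℕ → ℝ := fun j => (if j = 0 then (volume R).toReal else 0) +
    ∑ S ∈ (subs V).filter (fun S => cod S = j), (t S).toReal with hL
  refine ⟨L, ?_, ?_, ?_, ?_⟩
  · intro k _
    refine add_nonneg ?_ (Finset.sum_nonneg fun S _ => ENNReal.toReal_nonneg)
    split <;> simp [ENNReal.toReal_nonneg]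
  · -- L 0 = |R|
    rw [hL]
    simp only [if_pos rfl]
    have : ∑ S ∈ (subs V).filter (fun S => cod S = 0), (t S).toReal = 0 := by
      refine Finset.sum_eq_zero fun S hS => ?_
      rw [Finset.mem_filter] at hS
      rw [hzero S hS.1 hS.2]
      simp
    rw [this, add_zero]
    simp
  · -- L d = β_d
    have hd0 : d ≠ 0 := by omega
    rw [hL]
    show (if d = 0 then (volume R).toReal else 0) +
      ∑ S ∈ (subs V).filter (fun S => cod S = d), (t S).toReal = unitBallVol d
    rw [if_neg hd0, zero_add]
    -- ENNReal level identity
    have hEN : ∑ S ∈ (subs V).filter (fun S => cod S = d), t S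
        = volume (Metric.closedBall (0 : EuclideanSpace ℝ (Fin d)) 1) := by
      rw [ball_decomp V hV (by omega)]
      rw [← Finset.sum_filter_add_sum_filter_not (subs V) (fun S => cod S = d)
        (fun S => volume ((NC V S \ {0}) ∩ Metric.closedBall 0 1))]
      have h2 : ∑ S ∈ (subs V).filter (fun S => ¬ cod S = d),
          volume ((NC V S \ {0}) ∩ Metric.closedBall (0 : EuclideanSpace ℝ (Fin d)) 1) = 0 := by
        refine Finset.sum_eq_zero fun S hS => ?_
        rw [Finset.mem_filter] at hS
        obtain ⟨hSV, hSne⟩ := mem_subs.1 hS.1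
        have horthne : ((Wspan S)ᗮ : Submodule ℝ (EuclideanSpace ℝ (Fin d))) ≠ ⊤ := by
          intro hcontra
          apply hS.2
          show Module.finrank ℝ ((Wspan S)ᗮ : Submodule ℝ (EuclideanSpace ℝ (Fin d))) = d
          rw [hcontra, finrank_top, finrank_euclideanSpace_fin]
        have hsub : (NC V S \ {0}) ∩ Metric.closedBall (0 : EuclideanSpace ℝ (Fin d)) 1
            ⊆ (((Wspan S)ᗮ : Submodule ℝ (EuclideanSpace ℝ (Fin d))) : Set (EuclideanSpace ℝ (Fin d))) :=
          fun x hx => NC_subset_orth hSV hx.1.1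
        exact le_antisymm (le_trans (measure_mono hsub)
          (le_of_eq (Measure.addHaar_submodule _ _ horthne))) (zero_le)
      rw [h2, add_zero]
      refine Finset.sum_congr rfl fun S hS => ?_
      rw [Finset.mem_filter] at hS
      obtain ⟨v, rfl⟩ := (hsing S hS.1).1 hS.2
      exact piece_singleton_volume V v
    calc ∑ S ∈ (subs V).filter (fun S => cod S = d), (t S).toReal
        = (∑ S ∈ (subs V).filter (fun S => cod S = d), t S).toReal := by
          rw [ENNReal.toReal_sum]
          intro S hS
          exact htne S (Finset.mem_filter.1 hS).1
      _ = unitBallVol d := by rw [hEN]; rfl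
  · -- the polynomial identity
    intro lam hlam
    rcases hlam.eq_or_lt with heq | hpos
    · -- lam = 0
      rw [← heq]
      have hsmul : (0:ℝ) • Metric.closedBall (0 : EuclideanSpace ℝ (Fin d)) 1 = 0 :=
        Set.zero_smul_set ⟨0, by simp⟩
      rw [hsmul, add_zero]
      have : ∑ k ∈ Finset.range (d + 1), L k * (0:ℝ) ^ k = L 0 := by
        rw [Finset.sum_eq_single 0]
        · simp
        · intro k _ hk
          rw [zero_pow hk, mul_zero]
        · intro h
          exact absurd (Finset.mem_range.2 (by omega)) h
      rw [this, hL]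
      simp only [if_pos rfl]
      have hz : ∑ S ∈ (subs V).filter (fun S => cod S = 0), (t S).toReal = 0 := by
        refine Finset.sum_eq_zero fun S hS => ?_
        rw [Finset.mem_filter] at hS
        rw [hzero S hS.1 hS.2]
        simp
      rw [hz, add_zero]
      simp
    · -- lam > 0
      have hball : lam • Metric.closedBall (0 : EuclideanSpace ℝ (Fin d)) 1
          = Metric.closedBall 0 lam := by
        rw [smul_closedBall _ _ zero_le_one, smul_zero, Real.norm_eq_abs,
          abs_of_pos hpos, mul_one]
      rw [hball, hR]
      rw [dilation_decomp V hV hpos.le]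
      have hterm : ∀ S ∈ subs V, volume (piece V S lam)
          = ENNReal.ofReal (lam ^ cod S) * t S := by
        intro S hS
        obtain ⟨hSV, hSne⟩ := mem_subs.1 hS
        exact (piece_volume V S hSV hSne).2.2 lam hpos
      rw [Finset.sum_congr rfl hterm]
      have htermne : ∀ S ∈ subs V, ENNReal.ofReal (lam ^ cod S) * t S ≠ ⊤ := fun S hS =>
        ENNReal.mul_ne_top ENNReal.ofReal_ne_top (htne S hS)
      rw [ENNReal.toReal_add hKfin (by
        rw [← lt_top_iff_ne_top]
        exact ENNReal.sum_lt_top.2 fun S hS => lt_top_iff_ne_top.2 (htermne S hS)),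
        ENNReal.toReal_sum htermne]
      have hsummand : ∀ S ∈ subs V, (ENNReal.ofReal (lam ^ cod S) * t S).toReal
          = (t S).toReal * lam ^ cod S := by
        intro S hS
        rw [ENNReal.toReal_mul, ENNReal.toReal_ofReal (by positivity)]
        ring
      rw [Finset.sum_congr rfl hsummand]
      -- now the right-hand side
      have hRHS : ∑ k ∈ Finset.range (d + 1), L k * lam ^ k
          = (volume R).toReal + ∑ S ∈ subs V, (t S).toReal * lam ^ cod S := by
        rw [hL]
        simp only [add_mul, Finset.sum_add_distrib]
        congr 1
        · rw [Finset.sum_eq_single 0]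
          · simp
          · intro k _ hk
            rw [if_neg hk, zero_mul]
          · intro h
            exact absurd (Finset.mem_range.2 (by omega)) h
        · rw [← Finset.sum_fiberwise_of_maps_to (g := cod) (t := Finset.range (d + 1))
            (fun S _ => Finset.mem_range.2 (by have := hcodle S; omega))
            (fun S => (t S).toReal * lam ^ cod S)]
          refine Finset.sum_congr rfl fun k _ => ?_
          rw [Finset.sum_mul]
          refine Finset.sum_congr rfl fun S hS => ?_
          rw [(Finset.mem_filter.1 hS).2]
      rw [hRHS, hR]
end
end

section
/- Let d ≥ 2, let a ∈ ℝ^d and u > 0, and let R ⊆ B_d(a,u) be a nonempty polytope (the convex hull of a nonempty finite set of points). Then there exist nonnegative real numbers L₀, L₁, …, L_d such that |R + λB_d(0,1)| = ∑_{k=0}^d L_k λ^k for all λ ≥ 0, and moreover L_k ≤ (u+1)^d β_d for every k ∈ {0,…,d}. -/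
open MeasureTheory Set Real Pointwise ProbabilityTheory

noncomputable section

namespace SteinerNK

open scoped InnerProductSpace
open Module Metric

abbrev Eu (d : ℕ) := EuclideanSpace ℝ (Fin d)

variable {d : ℕ}

/-- base point of a finset -/
def bp (S : Finset (Eu d)) : Eu d := if h : S.Nonempty then h.choose else 0

lemma bp_mem {S : Finset (Eu d)} (h : S.Nonempty) : bp S ∈ S := by
  rw [bp, dif_pos h]; exact h.choose_spec

/-- "normal cone" associated to a subset `S` of the vertex set `V` -/
def NS (V S : Finset (Eu d)) : Set (Eu d) :=
  {u | (∀ v ∈ S, ∀ w ∈ S, ⟪u, v - w⟫_ℝ = 0) ∧ ∀ v ∈ V, v ∉ S → ⟪u, v - bp S⟫_ℝ < 0}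

/-- truncated punctured normal cone -/
def CS (V S : Finset (Eu d)) (lam : ℝ) : Set (Eu d) :=
  (NS V S ∩ closedBall 0 lam) \ {0}

/-- the piece of `P + lam • B` associated to `S` -/
def AS (V S : Finset (Eu d)) (lam : ℝ) : Set (Eu d) :=
  convexHull ℝ (S : Set (Eu d)) + CS V S lam

/-- direction space of `S` -/
def WS (S : Finset (Eu d)) : Submodule ℝ (Eu d) :=
  Submodule.span ℝ ((fun v => v - bp S) '' (S : Set (Eu d)))

/-- codimension exponent -/
def mS (S : Finset (Eu d)) : ℕ := finrank ℝ ((WS S)ᗮ : Submodule ℝ (Eu d))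

lemma mS_le (S : Finset (Eu d)) : mS S ≤ d := by
  have h := Submodule.finrank_le ((WS S)ᗮ : Submodule ℝ (Eu d))
  rwa [finrank_euclideanSpace_fin] at h

lemma mem_NS_iff {V S : Finset (Eu d)} {u : Eu d} :
    u ∈ NS V S ↔ (∀ v ∈ S, ∀ w ∈ S, ⟪u, v - w⟫_ℝ = 0) ∧
      ∀ v ∈ V, v ∉ S → ⟪u, v - bp S⟫_ℝ < 0 := Iff.rfl

lemma mem_CS_iff {V S : Finset (Eu d)} {lam : ℝ} {u : Eu d} :
    u ∈ CS V S lam ↔ (u ∈ NS V S ∧ ‖u‖ ≤ lam) ∧ u ≠ 0 := by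
  simp [CS, mem_closedBall_zero_iff]

lemma mem_AS_iff {V S : Finset (Eu d)} {lam : ℝ} {x : Eu d} :
    x ∈ AS V S lam ↔ ∃ p ∈ convexHull ℝ (S : Set (Eu d)), ∃ u ∈ CS V S lam, x = p + u := by
  constructor
  · rintro ⟨p, hp, u, hu, rfl⟩
    exact ⟨p, hp, u, hu, rfl⟩
  · rintro ⟨p, hp, u, hu, rfl⟩
    exact ⟨p, hp, u, hu, rfl⟩

lemma sub_bp_mem_WS {S : Finset (Eu d)} {q : Eu d}
    (hq : q ∈ convexHull ℝ (S : Set (Eu d))) : q - bp S ∈ WS S := by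
  have : convexHull ℝ (S : Set (Eu d)) ⊆ {q : Eu d | q - bp S ∈ WS S} := by
    apply convexHull_min
    · intro v hv
      exact Submodule.subset_span ⟨v, hv, rfl⟩
    · intro x hx y hy ta tb hta htb htab
      have : ta • x + tb • y - bp S = ta • (x - bp S) + tb • (y - bp S) := by
        rw [smul_sub, smul_sub]
        rw [show ta • x - ta • bp S + (tb • y - tb • bp S)
            = ta • x + tb • y - (ta + tb) • bp S by rw [add_smul]; abel, htab, one_smul]
      simp only [Set.mem_setOf_eq] at hx hy ⊢
      rw [this]
      exact (WS S).add_mem ((WS S).smul_mem _ hx) ((WS S).smul_mem _ hy)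
  exact this hq

lemma NS_subset_orth {V S : Finset (Eu d)} {u : Eu d} (hu : u ∈ NS V S) :
    u ∈ ((WS S)ᗮ : Submodule ℝ (Eu d)) := by
  rw [Submodule.mem_orthogonal]
  intro x hx
  induction hx using Submodule.span_induction with
  | mem x hx =>
      obtain ⟨v, hv, rfl⟩ := hx
      have hS : S.Nonempty := ⟨v, hv⟩
      have := (mem_NS_iff.1 hu).1 v hv (bp S) (bp_mem hS)
      rwa [real_inner_comm] at this
  | zero => exact inner_zero_left u
  | add x y _ _ hx hy => rw [inner_add_left, hx, hy, add_zero]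
  | smul c x _ hx => rw [real_inner_smul_left, hx, mul_zero]


section Proj

variable (W : Submodule ℝ (Eu d))

/-- the orthogonal decomposition equivalence -/
def eW : (W × (Wᗮ : Submodule ℝ (Eu d))) ≃ₗ[ℝ] Eu d :=
  W.prodEquivOfIsCompl Wᗮ W.isCompl_orthogonal

lemma eW_apply (x : W × (Wᗮ : Submodule ℝ (Eu d))) : eW W x = (x.1 : Eu d) + (x.2 : Eu d) :=
  Submodule.coe_prodEquivOfIsCompl' _ _ _ x

/-- the linear map which is the identity on `W` and `lam •` on `Wᗮ` -/
def Tm (lam : ℝ) : Eu d →ₗ[ℝ] Eu d :=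
  ((eW W : (W × (Wᗮ : Submodule ℝ (Eu d))) →ₗ[ℝ] Eu d).comp
    (LinearMap.prodMap LinearMap.id (lam • LinearMap.id))).comp
      ((eW W).symm : Eu d →ₗ[ℝ] (W × (Wᗮ : Submodule ℝ (Eu d))))

lemma Tm_apply_mem {w : Eu d} (hw : w ∈ W) (lam : ℝ) : Tm W lam w = w := by
  have h1 : ((eW W).symm w : W × (Wᗮ : Submodule ℝ (Eu d))) = (⟨w, hw⟩, 0) := by
    have := Submodule.prodEquivOfIsCompl_symm_apply_left
      (p := W) (q := (Wᗮ : Submodule ℝ (Eu d))) W.isCompl_orthogonal ⟨w, hw⟩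
    exact this
  simp only [Tm, LinearMap.coe_comp, Function.comp_apply, LinearEquiv.coe_coe, h1,
    LinearMap.prodMap_apply, LinearMap.id_apply, LinearMap.smul_apply, smul_zero]
  rw [eW_apply]
  simp

lemma Tm_apply_orth {c : Eu d} (hc : c ∈ (Wᗮ : Submodule ℝ (Eu d))) (lam : ℝ) :
    Tm W lam c = lam • c := by
  have h1 : ((eW W).symm c : W × (Wᗮ : Submodule ℝ (Eu d))) = (0, ⟨c, hc⟩) := by
    have := Submodule.prodEquivOfIsCompl_symm_apply_right
      (p := W) (q := (Wᗮ : Submodule ℝ (Eu d))) W.isCompl_orthogonal ⟨c, hc⟩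
    exact this
  simp only [Tm, LinearMap.coe_comp, Function.comp_apply, LinearEquiv.coe_coe, h1,
    LinearMap.prodMap_apply, LinearMap.id_apply, LinearMap.smul_apply]
  rw [eW_apply]
  simp

lemma det_prodMap {M N : Type*} [AddCommGroup M] [Module ℝ M] [AddCommGroup N] [Module ℝ N]
    [FiniteDimensional ℝ M] [FiniteDimensional ℝ N] (g : M →ₗ[ℝ] M) (h : N →ₗ[ℝ] N) :
    LinearMap.det (g.prodMap h) = LinearMap.det g * LinearMap.det h := by
  classical
  rw [← LinearMap.det_toMatrix ((finBasis ℝ M).prod (finBasis ℝ N)),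
    LinearMap.toMatrix_prodMap, Matrix.det_fromBlocks_zero₂₁,
    LinearMap.det_toMatrix, LinearMap.det_toMatrix]

lemma Tm_det (lam : ℝ) :
    LinearMap.det (Tm W lam) = lam ^ finrank ℝ ((Wᗮ : Submodule ℝ (Eu d))) := by
  rw [Tm, LinearMap.comp_assoc, LinearMap.det_conj, det_prodMap, LinearMap.det_id, one_mul,
    LinearMap.det_smul, LinearMap.det_id, mul_one]

lemma exists_decomp (x : Eu d) :
    ∃ w ∈ W, ∃ c ∈ (Wᗮ : Submodule ℝ (Eu d)), x = w + c := by
  have := (eW W).apply_symm_apply x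
  rw [eW_apply] at this
  exact ⟨_, (((eW W).symm x).1).2, _, (((eW W).symm x).2).2, this.symm⟩

lemma Tm_cont (lam : ℝ) : Continuous (Tm W lam) :=
  (Tm W lam).continuous_of_finiteDimensional

end Proj

lemma pj_add {W : Submodule ℝ (Eu d)} {w c : Eu d} (hw : w ∈ W)
    (hc : c ∈ (Wᗮ : Submodule ℝ (Eu d))) : Tm W 0 (w + c) = w := by
  rw [map_add, Tm_apply_mem W hw, Tm_apply_orth W hc, zero_smul, add_zero]

lemma AS_eq (V S : Finset (Eu d)) (lam : ℝ) :
    AS V S lam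
      = (fun x => bp S + Tm (WS S) 0 (x - bp S)) ⁻¹' (convexHull ℝ (S : Set (Eu d)))
        ∩ (fun x => (x - bp S) - Tm (WS S) 0 (x - bp S)) ⁻¹' (CS V S lam) := by
  ext x
  constructor
  · intro hx
    obtain ⟨p, hp, u, hu, rfl⟩ := mem_AS_iff.1 hx
    have hw : p - bp S ∈ WS S := sub_bp_mem_WS hp
    have hc : u ∈ ((WS S)ᗮ : Submodule ℝ (Eu d)) := NS_subset_orth (mem_CS_iff.1 hu).1.1
    have hdecomp : p + u - bp S = (p - bp S) + u := by abel
    have hT : Tm (WS S) 0 (p + u - bp S) = p - bp S := by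
      rw [hdecomp]; exact pj_add hw hc
    constructor
    · have heq : bp S + Tm (WS S) 0 (p + u - bp S) = p := by rw [hT]; abel
      show bp S + Tm (WS S) 0 (p + u - bp S) ∈ convexHull ℝ (S : Set (Eu d))
      rw [heq]; exact hp
    · have heq : (p + u - bp S) - Tm (WS S) 0 (p + u - bp S) = u := by rw [hT]; abel
      show (p + u - bp S) - Tm (WS S) 0 (p + u - bp S) ∈ CS V S lam
      rw [heq]; exact hu
  · rintro ⟨h1, h2⟩
    have hx : x = (bp S + Tm (WS S) 0 (x - bp S)) + ((x - bp S) - Tm (WS S) 0 (x - bp S)) := by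
      generalize Tm (WS S) 0 (x - bp S) = T
      abel
    exact mem_AS_iff.2 ⟨_, h1, _, h2, hx⟩

lemma measurableSet_CS (V S : Finset (Eu d)) (lam : ℝ) : MeasurableSet (CS V S lam) := by
  have h1 : MeasurableSet (NS V S) := by
    have hNS : NS V S = (⋂ v ∈ S, ⋂ w ∈ S, {u : Eu d | ⟪u, v - w⟫_ℝ = 0}) ∩
        ⋂ v ∈ V, ⋂ (_ : v ∉ S), {u : Eu d | ⟪u, v - bp S⟫_ℝ < 0} := by
      ext u
      simp only [mem_NS_iff, Set.mem_inter_iff, Set.mem_iInter, Set.mem_setOf_eq]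
    rw [hNS]
    refine MeasurableSet.inter ?_ ?_
    · refine MeasurableSet.biInter S.countable_toSet fun v _ => ?_
      refine MeasurableSet.biInter S.countable_toSet fun w _ => ?_
      exact measurableSet_eq_fun
        ((continuous_id.inner continuous_const).measurable) measurable_const
    · refine MeasurableSet.biInter V.countable_toSet fun v _ => ?_
      refine MeasurableSet.iInter fun _ => ?_
      exact measurableSet_lt
        ((continuous_id.inner continuous_const).measurable) measurable_const
  exact (h1.inter measurableSet_closedBall).diff (measurableSet_singleton 0)

lemma isCompact_hull (S : Finset (Eu d)) : IsCompact (convexHull ℝ (S : Set (Eu d))) :=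
  S.finite_toSet.isCompact_convexHull ℝ

lemma measurableSet_AS (V S : Finset (Eu d)) (lam : ℝ) : MeasurableSet (AS V S lam) := by
  rw [AS_eq]
  have hTc : Continuous fun x : Eu d => Tm (WS S) 0 (x - bp S) :=
    (Tm_cont _ 0).comp (continuous_id.sub continuous_const)
  exact ((continuous_const.add hTc).measurable
      (isCompact_hull S).isClosed.measurableSet).inter
    (((continuous_id.sub continuous_const).sub hTc).measurable (measurableSet_CS V S lam))

lemma key {V S : Finset (Eu d)} (hSV : S ⊆ V) {lam : ℝ} {x : Eu d} (hx : x ∈ AS V S lam) :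
    ∃ p u, x = p + u ∧ p ∈ convexHull ℝ (S : Set (Eu d)) ∧ u ≠ 0 ∧ ‖u‖ ≤ lam ∧
      (∀ v ∈ S, ⟪u, v - p⟫_ℝ = 0) ∧
      (∀ v ∈ V, v ∉ S → ⟪u, v - p⟫_ℝ < 0) ∧
      (∀ y ∈ convexHull ℝ (V : Set (Eu d)), y ≠ p → ‖x - p‖ < ‖x - y‖) ∧
      x ∉ convexHull ℝ (V : Set (Eu d)) := by
  obtain ⟨p, hp, u, hu, rfl⟩ := mem_AS_iff.1 hx
  obtain ⟨⟨hN, hball⟩, hne⟩ := mem_CS_iff.1 hu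
  have hS : S.Nonempty := by
    by_contra h
    rw [Finset.not_nonempty_iff_eq_empty] at h
    subst h
    simp only [Finset.coe_empty, convexHull_empty, Set.mem_empty_iff_false] at hp
  have horth : u ∈ ((WS S)ᗮ : Submodule ℝ (Eu d)) := NS_subset_orth hN
  have hbp0 : ∀ q ∈ convexHull ℝ (S : Set (Eu d)), ⟪u, q - bp S⟫_ℝ = 0 := by
    intro q hq
    have := (Submodule.mem_orthogonal _ u).1 horth _ (sub_bp_mem_WS hq)
    rwa [real_inner_comm] at this
  have hSeq : ∀ v ∈ S, ⟪u, v - p⟫_ℝ = 0 := by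
    intro v hv
    have h1 : ⟪u, v - bp S⟫_ℝ = 0 := (mem_NS_iff.1 hN).1 v hv (bp S) (bp_mem hS)
    have h2 : ⟪u, p - bp S⟫_ℝ = 0 := hbp0 p hp
    have h3 : v - p = (v - bp S) - (p - bp S) := by abel
    rw [h3, inner_sub_right, h1, h2, sub_zero]
  have hVlt : ∀ v ∈ V, v ∉ S → ⟪u, v - p⟫_ℝ < 0 := by
    intro v hv hvs
    have h1 := (mem_NS_iff.1 hN).2 v hv hvs
    have h2 : ⟪u, p - bp S⟫_ℝ = 0 := hbp0 p hp
    have h3 : v - p = (v - bp S) - (p - bp S) := by abel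
    rw [h3, inner_sub_right, h2, sub_zero]
    exact h1
  have hlin : IsLinearMap ℝ (fun y : Eu d => ⟪u, y⟫_ℝ) :=
    ⟨fun a b => inner_add_right u a b, fun c a => real_inner_smul_right u a c⟩
  have hhalf : ∀ y ∈ convexHull ℝ (V : Set (Eu d)), ⟪u, y - p⟫_ℝ ≤ 0 := by
    intro y hy
    have hcvx : Convex ℝ {y : Eu d | ⟪u, y⟫_ℝ ≤ ⟪u, p⟫_ℝ} := convex_halfSpace_le hlin _
    have hVsub : (V : Set (Eu d)) ⊆ {y : Eu d | ⟪u, y⟫_ℝ ≤ ⟪u, p⟫_ℝ} := by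
      intro v hv
      rw [Finset.mem_coe] at hv
      by_cases hvS : v ∈ S
      · have h := hSeq v hvS
        rw [inner_sub_right] at h
        simp only [Set.mem_setOf_eq]
        linarith
      · have h := hVlt v hv hvS
        rw [inner_sub_right] at h
        simp only [Set.mem_setOf_eq]
        linarith
    have := convexHull_min hVsub hcvx hy
    rw [Set.mem_setOf_eq] at this
    rw [inner_sub_right]
    linarith
  have hxp : p + u - p = u := by abel
  have hmin : ∀ y ∈ convexHull ℝ (V : Set (Eu d)), y ≠ p → ‖p + u - p‖ < ‖p + u - y‖ := by
    intro y hy hyp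
    have hsub : p + u - y = u - (y - p) := by abel
    rw [hxp, hsub]
    have hexp : ‖u - (y - p)‖ ^ 2 = ‖u‖ ^ 2 - 2 * ⟪u, y - p⟫_ℝ + ‖y - p‖ ^ 2 :=
      norm_sub_sq_real u (y - p)
    have hyp' : y - p ≠ 0 := sub_ne_zero.2 hyp
    have hpos : 0 < ‖y - p‖ := norm_pos_iff.2 hyp'
    have hle := hhalf y hy
    have h2 : ‖u‖ ^ 2 < ‖u - (y - p)‖ ^ 2 := by nlinarith
    exact lt_of_pow_lt_pow_left₀ 2 (norm_nonneg _) h2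
  have hxP : p + u ∉ convexHull ℝ (V : Set (Eu d)) := by
    intro hmem
    by_cases hxp' : p + u = p
    · exact hne (by rwa [add_eq_left] at hxp')
    · have h := hmin (p + u) hmem hxp'
      rw [sub_self, norm_zero] at h
      exact absurd h (not_lt.2 (norm_nonneg _))
  exact ⟨p, u, rfl, hp, hne, hball, hSeq, hVlt, hmin, hxP⟩

lemma AS_disjoint {V S T : Finset (Eu d)} (hSV : S ⊆ V) (hTV : T ⊆ V) (hST : S ≠ T)
    (lam : ℝ) : Disjoint (AS V S lam) (AS V T lam) := by
  rw [Set.disjoint_left]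
  intro x hxS hxT
  obtain ⟨p, u, hxpu, hpS, hune, -, hSeq, hSlt, hSmin, -⟩ := key hSV hxS
  obtain ⟨q, w, hxqw, hqT, hwne, -, hTeq, hTlt, hTmin, -⟩ := key hTV hxT
  have hpV : p ∈ convexHull ℝ (V : Set (Eu d)) :=
    convexHull_mono (Finset.coe_subset.2 hSV) hpS
  have hqV : q ∈ convexHull ℝ (V : Set (Eu d)) :=
    convexHull_mono (Finset.coe_subset.2 hTV) hqT
  have hpq : p = q := by
    by_contra hne
    exact lt_asymm (hSmin q hqV fun h => hne h.symm) (hTmin p hpV fun h => hne h)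
  subst hpq
  have huw : u = w := by
    have h : p + u = p + w := by rw [← hxpu, ← hxqw]
    exact add_left_cancel h
  apply hST
  ext v
  constructor
  · intro hvS
    by_contra hvT
    have h0 := hSeq v hvS
    have hneg := hTlt v (hSV hvS) hvT
    rw [← huw] at hneg
    exact absurd h0 (ne_of_lt hneg)
  · intro hvT
    by_contra hvS
    have h0 := hTeq v hvT
    rw [← huw] at h0
    have hneg := hSlt v (hTV hvT) hvS
    exact absurd h0 (ne_of_lt hneg)

lemma AS_disjoint_hull {V S : Finset (Eu d)} (hSV : S ⊆ V) (lam : ℝ) :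
    Disjoint (convexHull ℝ (V : Set (Eu d))) (AS V S lam) := by
  rw [Set.disjoint_right]
  intro x hx
  obtain ⟨-, -, -, -, -, -, -, -, -, hxP⟩ := key hSV hx
  exact hxP

lemma AS_subset {V S : Finset (Eu d)} (hSV : S ⊆ V) {lam : ℝ} (hlam : 0 ≤ lam) :
    AS V S lam ⊆ convexHull ℝ (V : Set (Eu d)) + lam • closedBall (0 : Eu d) 1 := by
  intro x hx
  obtain ⟨p, hp, u, hu, rfl⟩ := mem_AS_iff.1 hx
  obtain ⟨⟨-, hball⟩, hne⟩ := mem_CS_iff.1 hu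
  have hlam' : 0 < lam := by
    rcases hlam.lt_or_eq with h | h
    · exact h
    · exact absurd (norm_le_zero_iff.1 (h ▸ hball)) hne
  refine Set.add_mem_add (convexHull_mono (Finset.coe_subset.2 hSV) hp) ?_
  rw [Set.mem_smul_set_iff_inv_smul_mem₀ hlam'.ne']
  rw [mem_closedBall_zero_iff, norm_smul, norm_inv, Real.norm_eq_abs, abs_of_pos hlam']
  calc lam⁻¹ * ‖u‖ ≤ lam⁻¹ * lam :=
        mul_le_mul_of_nonneg_left hball (inv_nonneg.2 hlam)
    _ = 1 := inv_mul_cancel₀ hlam'.ne'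

lemma hull_subset_sum {V : Finset (Eu d)} {lam : ℝ} :
    convexHull ℝ (V : Set (Eu d))
      ⊆ convexHull ℝ (V : Set (Eu d)) + lam • closedBall (0 : Eu d) 1 := by
  intro x hx
  have h0 : (0 : Eu d) ∈ lam • closedBall (0 : Eu d) 1 :=
    ⟨0, Metric.mem_closedBall_self zero_le_one, smul_zero lam⟩
  have h := Set.add_mem_add hx h0
  rwa [add_zero] at h

lemma cover {V : Finset (Eu d)} {lam : ℝ} (hlam : 0 ≤ lam) :
    convexHull ℝ (V : Set (Eu d)) + lam • closedBall (0 : Eu d) 1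
      = convexHull ℝ (V : Set (Eu d)) ∪ ⋃ S ∈ V.powerset, AS V S lam := by
  apply Set.Subset.antisymm
  · intro x hx
    by_cases hxP : x ∈ convexHull ℝ (V : Set (Eu d))
    · exact Or.inl hxP
    refine Or.inr ?_
    obtain ⟨y, hy, z, hz, rfl⟩ := hx
    obtain ⟨b, hb, rfl⟩ := hz
    have hb1 : ‖b‖ ≤ 1 := mem_closedBall_zero_iff.1 hb
    have hPne : (convexHull ℝ (V : Set (Eu d))).Nonempty := ⟨y, hy⟩
    have hPc : IsCompact (convexHull ℝ (V : Set (Eu d))) := isCompact_hull V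
    have hPcvx : Convex ℝ (convexHull ℝ (V : Set (Eu d))) := convex_convexHull ℝ _
    obtain ⟨p, hpP, hproj⟩ := exists_norm_eq_iInf_of_complete_convex hPne
      hPc.isComplete hPcvx (y + lam • b)
    have hobtuse := (norm_eq_iInf_iff_real_inner_le_zero hPcvx hpP).1 hproj
    have hmin : ∀ y' ∈ convexHull ℝ (V : Set (Eu d)),
        ‖y + lam • b - p‖ ≤ ‖y + lam • b - y'‖ := by
      intro y' hy'
      rw [hproj]
      exact ciInf_le ⟨0, by rintro _ ⟨w, rfl⟩; exact norm_nonneg _⟩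
        (⟨y', hy'⟩ : (convexHull ℝ (V : Set (Eu d))))
    set u := y + lam • b - p with hu_def
    have hune : u ≠ 0 := sub_ne_zero.2 fun h => hxP (by show y + lam • b ∈ convexHull ℝ (V : Set (Eu d)); rw [h]; exact hpP)
    classical
    set S := V.filter (fun v => ⟪u, v - p⟫_ℝ = 0) with hS_def
    have hmemS : ∀ v, v ∈ S ↔ (v ∈ V ∧ ⟪u, v - p⟫_ℝ = 0) := fun v => by
      rw [hS_def]; exact Finset.mem_filter
    have hSsubV : S ⊆ V := fun v hv => ((hmemS v).1 hv).1
    have hpP' := hpP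
    rw [Finset.convexHull_eq] at hpP'
    obtain ⟨cw, hcw0, hcw1, hcwc⟩ := hpP'
    have hcm : ∑ v ∈ V, cw v • v = p := by
      rw [← hcwc, Finset.centerMass_eq_of_sum_1 _ _ hcw1]
      simp only [id_eq]
    have hsum0 : ∑ v ∈ V, cw v * ⟪u, v - p⟫_ℝ = 0 := by
      have h1 : ∑ v ∈ V, cw v * ⟪u, v - p⟫_ℝ = ⟪u, ∑ v ∈ V, cw v • (v - p)⟫_ℝ := by
        rw [inner_sum]
        exact Finset.sum_congr rfl fun v hv => (real_inner_smul_right u (v - p) (cw v)).symm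
      have h2 : ∑ v ∈ V, cw v • (v - p) = 0 := by
        simp only [smul_sub]
        rw [Finset.sum_sub_distrib, hcm, ← Finset.sum_smul, hcw1, one_smul, sub_self]
      rw [h1, h2, inner_zero_right]
    have hterm : ∀ v ∈ V, cw v * ⟪u, v - p⟫_ℝ = 0 := by
      have hnp : ∀ w ∈ V, cw w * ⟪u, w - p⟫_ℝ ≤ 0 := fun w hw =>
        mul_nonpos_iff.2 (Or.inl ⟨hcw0 w hw, hobtuse w (subset_convexHull ℝ _ (Finset.mem_coe.2 hw))⟩)
      exact (Finset.sum_eq_zero_iff_of_nonpos hnp).1 hsum0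
    have hcw_zero : ∀ v ∈ V, v ∉ S → cw v = 0 := by
      intro v hv hvS
      have hne0 : ⟪u, v - p⟫_ℝ ≠ 0 := fun h => hvS ((hmemS v).2 ⟨hv, h⟩)
      rcases mul_eq_zero.1 (hterm v hv) with h | h
      · exact h
      · exact absurd h hne0
    have hsplit := Finset.sum_filter_add_sum_filter_not V (fun v => ⟪u, v - p⟫_ℝ = 0) cw
    have hzero2 : ∑ v ∈ V.filter (fun v => ¬⟪u, v - p⟫_ℝ = 0), cw v = 0 :=
      Finset.sum_eq_zero fun v hv => by
        obtain ⟨hv1, hv2⟩ := Finset.mem_filter.1 hv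
        exact hcw_zero v hv1 fun hvS => hv2 ((hmemS v).1 hvS).2
    have hsumS : ∑ v ∈ S, cw v = 1 := by
      rw [hS_def]
      have := hsplit
      rw [hzero2, add_zero] at this
      rw [this, hcw1]
    have hSne : S.Nonempty := by
      by_contra h
      rw [Finset.not_nonempty_iff_eq_empty] at h
      rw [h, Finset.sum_empty] at hsumS
      exact one_ne_zero hsumS.symm
    have hmsv : ∑ v ∈ S, cw v • v = p := by
      have hsplit2 := Finset.sum_filter_add_sum_filter_not V
        (fun v => ⟪u, v - p⟫_ℝ = 0) (fun v => cw v • v)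
      have hzero3 : ∑ v ∈ V.filter (fun v => ¬⟪u, v - p⟫_ℝ = 0), cw v • v = 0 :=
        Finset.sum_eq_zero fun v hv => by
          obtain ⟨hv1, hv2⟩ := Finset.mem_filter.1 hv
          rw [hcw_zero v hv1 fun hvS => hv2 ((hmemS v).1 hvS).2, zero_smul]
      rw [hS_def]
      rw [hzero3, add_zero] at hsplit2
      rw [hsplit2, hcm]
    have hpS : p ∈ convexHull ℝ (S : Set (Eu d)) := by
      have hmem := S.centerMass_mem_convexHull (fun v hv => hcw0 v (hSsubV hv))
        (by rw [hsumS]; norm_num) (fun v hv => Finset.mem_coe.2 hv)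
      rw [Finset.centerMass_eq_of_sum_1 _ _ hsumS] at hmem
      rwa [hmsv] at hmem
    have hbp_in : ⟪u, bp S - p⟫_ℝ = 0 := ((hmemS _).1 (bp_mem hSne)).2
    refine Set.mem_biUnion (Finset.mem_powerset.2 hSsubV) ?_
    refine mem_AS_iff.2 ⟨p, hpS, u, ?_, by rw [hu_def]; abel⟩
    refine mem_CS_iff.2 ⟨⟨mem_NS_iff.2 ⟨?_, ?_⟩, ?_⟩, hune⟩
    · intro v hv w hw
      have h1 := ((hmemS v).1 hv).2
      have h2 := ((hmemS w).1 hw).2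
      have h3 : v - w = (v - p) - (w - p) := by abel
      rw [h3, inner_sub_right, h1, h2, sub_zero]
    · intro v hv hvS
      have h1 : ⟪u, v - p⟫_ℝ ≤ 0 := hobtuse v (subset_convexHull ℝ _ (Finset.mem_coe.2 hv))
      have h2 : ⟪u, v - p⟫_ℝ ≠ 0 := fun h => hvS ((hmemS v).2 ⟨hv, h⟩)
      have h3 : v - bp S = (v - p) - (bp S - p) := by abel
      rw [h3, inner_sub_right, hbp_in, sub_zero]
      exact lt_of_le_of_ne h1 h2
    · have h := hmin y hy
      rw [show y + lam • b - y = lam • b by abel] at h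
      rw [norm_smul, Real.norm_eq_abs, abs_of_nonneg hlam] at h
      calc ‖u‖ ≤ lam * ‖b‖ := h
        _ ≤ lam * 1 := mul_le_mul_of_nonneg_left hb1 hlam
        _ = lam := mul_one lam
  · intro x hx
    rcases hx with hx | hx
    · exact hull_subset_sum hx
    · obtain ⟨S, hS, hxS⟩ := Set.mem_iUnion₂.1 hx
      exact AS_subset (Finset.mem_powerset.1 hS) hlam hxS

lemma smul_mem_CS {V S : Finset (Eu d)} {lam c : ℝ} (hc : 0 < c) {u : Eu d}
    (hu : u ∈ CS V S lam) : c • u ∈ CS V S (c * lam) := by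
  obtain ⟨⟨hN, hball⟩, hne⟩ := mem_CS_iff.1 hu
  refine mem_CS_iff.2 ⟨⟨mem_NS_iff.2 ⟨?_, ?_⟩, ?_⟩, ?_⟩
  · intro v hv w hw
    rw [real_inner_smul_left, (mem_NS_iff.1 hN).1 v hv w hw, mul_zero]
  · intro v hv hvS
    rw [real_inner_smul_left]
    exact mul_neg_of_pos_of_neg hc ((mem_NS_iff.1 hN).2 v hv hvS)
  · rw [norm_smul, Real.norm_eq_abs, abs_of_pos hc]
    exact mul_le_mul_of_nonneg_left hball hc.le
  · exact smul_ne_zero hc.ne' hne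

lemma CS_smul {V S : Finset (Eu d)} {lam : ℝ} (hlam : 0 < lam) :
    CS V S lam = lam • CS V S 1 := by
  ext u
  constructor
  · intro hu
    rw [Set.mem_smul_set_iff_inv_smul_mem₀ hlam.ne']
    have h := smul_mem_CS (inv_pos.2 hlam) hu
    rwa [inv_mul_cancel₀ hlam.ne'] at h
  · rintro ⟨c, hc, rfl⟩
    have h := smul_mem_CS hlam hc
    rwa [mul_one] at h

lemma AS_vadd (V S : Finset (Eu d)) (lam : ℝ) :
    AS V S lam
      = bp S +ᵥ (((-bp S) +ᵥ convexHull ℝ (S : Set (Eu d))) + CS V S lam) := by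
  ext x
  rw [Set.mem_vadd_set_iff_neg_vadd_mem]
  constructor
  · intro hx
    obtain ⟨p, hp, u, hu, rfl⟩ := mem_AS_iff.1 hx
    refine ⟨-bp S + p, ⟨p, hp, rfl⟩, u, hu, ?_⟩
    show -bp S + p + u = -bp S +ᵥ (p + u)
    rw [vadd_eq_add]; abel
  · rintro ⟨q, ⟨p, hp, rfl⟩, u, hu, hq⟩
    refine mem_AS_iff.2 ⟨p, hp, u, hu, ?_⟩
    simp only [vadd_eq_add] at hq
    have : -bp S + (p + u) = -bp S + x := by rw [← hq]; abel
    have h2 := add_left_cancel this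
    exact h2.symm

lemma mS_eq (S : Finset (Eu d)) :
    mS S = finrank ℝ (((WS S)ᗮ : Submodule ℝ (Eu d))) := rfl

lemma vol_AS {V S : Finset (Eu d)} {lam : ℝ} (hlam : 0 < lam) :
    volume (AS V S lam) = ENNReal.ofReal (lam ^ mS S) * volume (AS V S 1) := by
  set D := (-bp S) +ᵥ convexHull ℝ (S : Set (Eu d)) with hD
  have hDW : ∀ q ∈ D, q ∈ WS S := by
    rintro q ⟨p, hp, rfl⟩
    show -bp S +ᵥ p ∈ WS S
    rw [vadd_eq_add, neg_add_eq_sub]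
    exact sub_bp_mem_WS hp
  have himg : Tm (WS S) lam '' (D + CS V S 1) = D + CS V S lam := by
    rw [CS_smul hlam]
    ext x
    constructor
    · rintro ⟨z, ⟨q, hq, c, hc, rfl⟩, rfl⟩
      rw [map_add, Tm_apply_mem _ (hDW q hq), Tm_apply_orth _ (NS_subset_orth (mem_CS_iff.1 hc).1.1)]
      exact ⟨q, hq, lam • c, ⟨c, hc, rfl⟩, rfl⟩
    · rintro ⟨q, hq, z, ⟨c, hc, rfl⟩, rfl⟩
      refine ⟨q + c, ⟨q, hq, c, hc, rfl⟩, ?_⟩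
      rw [map_add, Tm_apply_mem _ (hDW q hq), Tm_apply_orth _ (NS_subset_orth (mem_CS_iff.1 hc).1.1)]
  calc volume (AS V S lam) = volume (D + CS V S lam) := by
        rw [AS_vadd V S lam, ← hD, measure_vadd (μ := volume)]
    _ = volume (Tm (WS S) lam '' (D + CS V S 1)) := by rw [himg]
    _ = ENNReal.ofReal |LinearMap.det (Tm (WS S) lam)| * volume (D + CS V S 1) :=
        MeasureTheory.Measure.addHaar_image_linearMap _ _ _
    _ = ENNReal.ofReal (lam ^ mS S) * volume (AS V S 1) := by
        rw [Tm_det, abs_of_nonneg (pow_nonneg hlam.le _), AS_vadd V S 1, ← hD,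
          measure_vadd (μ := volume), ← mS_eq]

lemma AS_zero (V S : Finset (Eu d)) : AS V S 0 = ∅ := by
  have h : CS V S 0 = ∅ := by
    rw [Set.eq_empty_iff_forall_notMem]
    intro u hu
    obtain ⟨⟨-, hball⟩, hne⟩ := mem_CS_iff.1 hu
    exact hne (norm_le_zero_iff.1 hball)
  rw [AS, h, Set.add_empty]

lemma AS_one_empty {V S : Finset (Eu d)} (hm : mS S = 0) : AS V S 1 = ∅ := by
  have horth : ((WS S)ᗮ : Submodule ℝ (Eu d)) = ⊥ := Submodule.finrank_eq_zero.1 hm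
  have h : CS V S 1 = ∅ := by
    rw [Set.eq_empty_iff_forall_notMem]
    intro u hu
    obtain ⟨⟨hN, -⟩, hne⟩ := mem_CS_iff.1 hu
    have h2 := NS_subset_orth hN
    rw [horth, Submodule.mem_bot] at h2
    exact hne h2
  rw [AS, h, Set.add_empty]

lemma vol_AS_toReal {V S : Finset (Eu d)} {lam : ℝ} (hlam : 0 ≤ lam) :
    (volume (AS V S lam)).toReal = (volume (AS V S 1)).toReal * lam ^ mS S := by
  rcases hlam.lt_or_eq with h | h
  · rw [vol_AS h, ENNReal.toReal_mul, ENNReal.toReal_ofReal (pow_nonneg hlam _)]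
    ring
  · rw [← h, AS_zero, measure_empty, ENNReal.toReal_zero]
    rcases Nat.eq_zero_or_pos (mS S) with hm | hm
    · rw [AS_one_empty hm, measure_empty, ENNReal.toReal_zero, zero_mul]
    · rw [zero_pow hm.ne', mul_zero]

end SteinerNK

/-- Steiner coefficients of a polytope contained in a ball `B_d(a,u)` are bounded by
`(u+1)^d β_d`. -/
theorem steiner_coeff_bound (d : ℕ) (hd : 2 ≤ d)
    (a : EuclideanSpace ℝ (Fin d)) (u : ℝ) (hu : 0 < u)
    (V : Finset (EuclideanSpace ℝ (Fin d))) (hV : V.Nonempty)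
    (R : Set (EuclideanSpace ℝ (Fin d)))
    (hR : R = convexHull ℝ (V : Set (EuclideanSpace ℝ (Fin d))))
    (hRB : R ⊆ Metric.closedBall a u) :
    ∃ L : ℕ → ℝ, (∀ k, k ≤ d → 0 ≤ L k) ∧
      (∀ lam : ℝ, 0 ≤ lam →
        (volume (R + lam • Metric.closedBall (0 : EuclideanSpace ℝ (Fin d)) 1)).toReal
          = ∑ k ∈ Finset.range (d + 1), L k * lam ^ k) ∧
      ∀ k, k ≤ d → L k ≤ (u + 1)^d * unitBallVol d := by
  classical
  subst hR
  set P := convexHull ℝ (V : Set (EuclideanSpace ℝ (Fin d))) with hP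
  have hsub : ∀ lam : ℝ, 0 ≤ lam →
      P + lam • Metric.closedBall (0 : EuclideanSpace ℝ (Fin d)) 1
        ⊆ Metric.closedBall a (u + lam) := by
    intro lam hlam x hx
    obtain ⟨y, hy, z, hz, rfl⟩ := hx
    obtain ⟨b, hb, rfl⟩ := hz
    have h1 : dist y a ≤ u := Metric.mem_closedBall.1 (hRB hy)
    have hb1 : ‖b‖ ≤ 1 := mem_closedBall_zero_iff.1 hb
    show y + lam • b ∈ Metric.closedBall a (u + lam)
    rw [Metric.mem_closedBall]
    have htri : dist (y + lam • b) a ≤ dist (y + lam • b) y + dist y a := dist_triangle _ _ _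
    have h2 : dist (y + lam • b) y = ‖lam • b‖ := by
      rw [dist_eq_norm]
      congr 1
      abel
    rw [norm_smul, Real.norm_eq_abs, abs_of_nonneg hlam] at h2
    nlinarith
  have hPfin' : volume P ≠ ⊤ :=
    (lt_of_le_of_lt (measure_mono hRB) measure_closedBall_lt_top).ne
  have hASfin : ∀ S : Finset (EuclideanSpace ℝ (Fin d)), S ∈ V.powerset →
      ∀ lam : ℝ, 0 ≤ lam → volume (SteinerNK.AS V S lam) ≠ ⊤ := by
    intro S hS lam hlam
    have hsubA : SteinerNK.AS V S lam ⊆ Metric.closedBall a (u + lam) :=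
      (SteinerNK.AS_subset (Finset.mem_powerset.1 hS) hlam).trans (hsub lam hlam)
    exact (lt_of_le_of_lt (measure_mono hsubA) measure_closedBall_lt_top).ne
  set c : Finset (EuclideanSpace ℝ (Fin d)) → ℝ :=
    fun S => (volume (SteinerNK.AS V S 1)).toReal with hc
  set L : ℕ → ℝ := fun k =>
    (if k = 0 then (volume P).toReal else 0)
      + ∑ S ∈ V.powerset.filter (fun S => SteinerNK.mS S = k), c S with hL
  have hLnonneg : ∀ k, 0 ≤ L k := by
    intro k
    apply add_nonneg
    · split
      · exact ENNReal.toReal_nonneg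
      · exact le_refl 0
    · exact Finset.sum_nonneg fun S _ => ENNReal.toReal_nonneg
  have main : ∀ lam : ℝ, 0 ≤ lam →
      (volume (P + lam • Metric.closedBall (0 : EuclideanSpace ℝ (Fin d)) 1)).toReal
        = ∑ k ∈ Finset.range (d + 1), L k * lam ^ k := by
    intro lam hlam
    have hcover := SteinerNK.cover (V := V) (lam := lam) hlam
    have hdisj : Disjoint P (⋃ S ∈ V.powerset, SteinerNK.AS V S lam) := by
      refine Set.disjoint_left.2 fun x hxP hxU => ?_
      obtain ⟨S, hS, hxS⟩ := Set.mem_iUnion₂.1 hxU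
      exact (SteinerNK.AS_disjoint_hull (Finset.mem_powerset.1 hS) lam).le_bot ⟨hxP, hxS⟩
    have hmeasU : MeasurableSet (⋃ S ∈ V.powerset, SteinerNK.AS V S lam) :=
      MeasurableSet.biUnion V.powerset.countable_toSet
        fun S _ => SteinerNK.measurableSet_AS V S lam
    have hsum : volume (P + lam • Metric.closedBall (0 : EuclideanSpace ℝ (Fin d)) 1)
        = volume P + ∑ S ∈ V.powerset, volume (SteinerNK.AS V S lam) := by
      rw [hcover, measure_union hdisj hmeasU,
        measure_biUnion_finset
          (fun S hS T hT hST => SteinerNK.AS_disjoint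
            (Finset.mem_powerset.1 (Finset.mem_coe.1 hS))
            (Finset.mem_powerset.1 (Finset.mem_coe.1 hT)) hST lam)
          (fun S _ => SteinerNK.measurableSet_AS V S lam)]
    have hsumfin : (∑ S ∈ V.powerset, volume (SteinerNK.AS V S lam)) ≠ ⊤ := by
      refine (ENNReal.sum_lt_top.2 fun S hS => ?_).ne
      exact lt_top_iff_ne_top.2 (hASfin S hS lam hlam)
    rw [hsum, ENNReal.toReal_add hPfin' hsumfin,
      ENNReal.toReal_sum (fun S hS => hASfin S hS lam hlam)]
    have hterm : ∀ S ∈ V.powerset,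
        (volume (SteinerNK.AS V S lam)).toReal = c S * lam ^ SteinerNK.mS S :=
      fun S _ => SteinerNK.vol_AS_toReal hlam
    rw [Finset.sum_congr rfl hterm]
    have hrhs : ∑ k ∈ Finset.range (d + 1), L k * lam ^ k
        = (volume P).toReal + ∑ S ∈ V.powerset, c S * lam ^ SteinerNK.mS S := by
      simp only [hL, add_mul, Finset.sum_add_distrib]
      congr 1
      · rw [Finset.sum_eq_single 0 (fun b _ hb0 => by simp [hb0])
          (fun h => absurd (Finset.mem_range.2 (Nat.succ_pos d)) h)]
        simp
      · rw [← Finset.sum_fiberwise_of_maps_to (g := fun S => SteinerNK.mS S)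
            (fun S _ => Finset.mem_range.2 (Nat.lt_succ_of_le (SteinerNK.mS_le S)))
            (fun S => c S * lam ^ SteinerNK.mS S)]
        refine Finset.sum_congr rfl fun k _ => ?_
        rw [Finset.sum_mul]
        refine Finset.sum_congr rfl fun S hS => ?_
        rw [(Finset.mem_filter.1 hS).2]
    rw [hrhs]
  refine ⟨L, fun k _ => hLnonneg k, main, ?_⟩
  intro k hk
  have h1 : ∑ j ∈ Finset.range (d + 1), L j
      = (volume (P + (1:ℝ) • Metric.closedBall (0 : EuclideanSpace ℝ (Fin d)) 1)).toReal := by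
    rw [main 1 zero_le_one]
    simp
  have h2 : volume (P + (1:ℝ) • Metric.closedBall (0 : EuclideanSpace ℝ (Fin d)) 1)
      ≤ volume (Metric.closedBall a (u + 1)) := measure_mono (hsub 1 zero_le_one)
  have h3 : (volume (Metric.closedBall a (u + 1))).toReal = (u + 1)^d * unitBallVol d := by
    rw [MeasureTheory.Measure.addHaar_closedBall' volume a (by linarith : (0:ℝ) ≤ u + 1),
      ENNReal.toReal_mul, ENNReal.toReal_ofReal (by positivity), finrank_euclideanSpace_fin]
    rfl
  have h4 : L k ≤ ∑ j ∈ Finset.range (d + 1), L j :=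
    Finset.single_le_sum (fun j _ => hLnonneg j) (Finset.mem_range.2 (Nat.lt_succ_of_le hk))
  have h5 : (volume (P + (1:ℝ) • Metric.closedBall (0 : EuclideanSpace ℝ (Fin d)) 1)).toReal
      ≤ (volume (Metric.closedBall a (u + 1))).toReal :=
    ENNReal.toReal_mono measure_closedBall_lt_top.ne h2
  calc L k ≤ ∑ j ∈ Finset.range (d + 1), L j := h4
    _ = _ := h1
    _ ≤ _ := h5
    _ = _ := h3
end
end
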